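/- arXiv:2412.18976 — 3 statements merged into one kernel-verified Lean document; each statement's English description precedes it below -/
import Mathlib

section
/- Let g = (g₁, g₂) : [a,b] → ℝ² be absolutely continuous. Then for Lebesgue-almost every y ∈ ℝ the level set {t ∈ [a,b] : g₂(t) = y} is finite (in particular the image g([a,b]) meets the horizontal line ℝ × {y} in only finitely many points), and at every t ∈ [a,b] with g₂(t) = y the function g₂ is differentiable at t with g₂'(t) ≠ 0. -/
open MeasureTheory Set Filter Topology intervalIntegral ENNReal NNReal
open scoped Interval

/-- Oscillation bound for a primitive of an integrable function. -/
lemma aux_osc (F : ℝ → ℝ) (hF : Integrable F) (a c u v : ℝ) :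
    ‖(c + ∫ t in a..u, F t) - (c + ∫ t in a..v, F t)‖
      ≤ ((volume.withDensity fun y => (‖F y‖₊ : ℝ≥0∞)) (uIcc v u)).toReal := by
  have hadd := intervalIntegral.integral_add_adjacent_intervals (a := a) (b := v) (c := u) (f := F) (μ := volume)
      hF.intervalIntegrable hF.intervalIntegrable
  have h1 : (c + ∫ t in a..u, F t) - (c + ∫ t in a..v, F t) = ∫ t in v..u, F t := by
    rw [← hadd]; ring
  rw [h1]
  have h2 : ‖∫ t in v..u, F t‖ ≤ ∫ t in Ι v u, ‖F t‖ :=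
    intervalIntegral.norm_integral_le_integral_norm_uIoc
  have h3 : ∫ t in Ι v u, ‖F t‖ = (∫⁻ t in Ι v u, (‖F t‖₊ : ℝ≥0∞)).toReal := by
    exact integral_norm_eq_lintegral_enorm (hF.aestronglyMeasurable.restrict)
  have h4 : (∫⁻ t in Ι v u, (‖F t‖₊ : ℝ≥0∞)) ≤ ∫⁻ t in uIcc v u, (‖F t‖₊ : ℝ≥0∞) :=
    lintegral_mono_set Ioc_subset_Icc_self
  have h5 : (volume.withDensity fun y => (‖F y‖₊ : ℝ≥0∞)) (uIcc v u)
      = ∫⁻ t in uIcc v u, (‖F t‖₊ : ℝ≥0∞) := withDensity_apply _ measurableSet_uIcc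
  have hfin : (∫⁻ t in uIcc v u, (‖F t‖₊ : ℝ≥0∞)) ≠ ⊤ :=
    (lt_of_le_of_lt (setLIntegral_le_lintegral _ _) hF.2).ne
  calc ‖∫ t in v..u, F t‖ ≤ (∫⁻ t in Ι v u, (‖F t‖₊ : ℝ≥0∞)).toReal := h3 ▸ h2
    _ ≤ (∫⁻ t in uIcc v u, (‖F t‖₊ : ℝ≥0∞)).toReal := ENNReal.toReal_mono hfin h4
    _ = _ := by rw [h5]

/-- Luzin N property for primitives of integrable functions. -/
lemma aux_luzinN (F : ℝ → ℝ) (hF : Integrable F) (a c : ℝ) {s : Set ℝ}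
    (hs : volume s = 0) :
    volume ((fun u => c + ∫ t in a..u, F t) '' s) = 0 := by
  set φ : ℝ → ℝ := fun u => c + ∫ t in a..u, F t with hφdef
  set ν : Measure ℝ := volume.withDensity fun y => (‖F y‖₊ : ℝ≥0∞) with hνdef
  haveI hνfin : IsFiniteMeasure ν := isFiniteMeasure_withDensity hF.2.ne
  have key : ∀ U : Set ℝ, IsOpen U → volume (φ '' U) ≤ ν U := by
    intro U hU
    set S : Set (Set ℝ) := (fun x => connectedComponentIn U x) '' U with hS
    have hSopen : ∀ C ∈ S, IsOpen C := by
      rintro C ⟨x, hx, rfl⟩; exact hU.connectedComponentIn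
    have hSne : ∀ C ∈ S, C.Nonempty := by
      rintro C ⟨x, hx, rfl⟩; exact ⟨x, mem_connectedComponentIn hx⟩
    have hSdisj : S.PairwiseDisjoint id := by
      rintro C ⟨x, hx, rfl⟩ D ⟨y, hy, rfl⟩ hne
      refine disjoint_left.mpr fun z hz hz' => hne ?_
      simp only [id] at hz hz'
      have e1 := connectedComponentIn_eq hz
      have e2 := connectedComponentIn_eq hz'
      exact e1.trans e2.symm
    have hScount : S.Countable :=
      hSdisj.countable_of_isOpen (fun C hC => hSopen C hC) (fun C hC => hSne C hC)
    have hU_eq : U = ⋃₀ S := by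
      apply Subset.antisymm
      · exact fun x hx => ⟨_, ⟨x, hx, rfl⟩, mem_connectedComponentIn hx⟩
      · exact sUnion_subset (by rintro C ⟨x, hx, rfl⟩; exact connectedComponentIn_subset U x)
    have hcomp : ∀ C ∈ S, volume (φ '' C) ≤ ν C := by
      intro C hC
      refine (Real.volume_le_diam _).trans ?_
      refine EMetric.diam_le ?_
      rintro _ ⟨u, hu, rfl⟩ _ ⟨v, hv, rfl⟩
      have hoc : OrdConnected C := by
        obtain ⟨x, hx, rfl⟩ := hC
        exact isPreconnected_connectedComponentIn.ordConnected
      have hsub : uIcc v u ⊆ C := hoc.uIcc_subset hv hu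
      have hosc := aux_osc F hF a c u v
      have hle : ν (uIcc v u) ≤ ν C := measure_mono hsub
      have hCfin : ν C ≠ ⊤ := measure_ne_top ν C
      rw [edist_dist, Real.dist_eq]
      refine ENNReal.ofReal_le_of_le_toReal ?_
      calc |φ u - φ v| ≤ (ν (uIcc v u)).toReal := hosc
        _ ≤ (ν C).toReal := ENNReal.toReal_mono hCfin hle
    calc volume (φ '' U) = volume (⋃ C ∈ S, φ '' C) := by
          rw [hU_eq, sUnion_eq_biUnion, image_iUnion₂]
      _ ≤ ∑' C : S, volume (φ '' C) := measure_biUnion_le volume hScount _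
      _ ≤ ∑' C : S, ν C := ENNReal.tsum_le_tsum fun C => hcomp C C.2
      _ = ν (⋃₀ S) := (measure_sUnion hScount hSdisj
            (fun C hC => (hSopen C hC).measurableSet)).symm
      _ = ν U := by rw [← hU_eq]
  have hmain : ∀ ε : ℝ≥0∞, 0 < ε → volume (φ '' s) ≤ ε := by
    intro ε hε
    have hνt : ν (toMeasurable volume s) = 0 := by
      rw [hνdef, withDensity_apply _ (measurableSet_toMeasurable _ _),
        Measure.restrict_eq_zero.mpr (by rwa [measure_toMeasurable]), lintegral_zero_measure]
    obtain ⟨U, hsubU, hUopen, hUε⟩ :=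
      Set.exists_isOpen_lt_of_lt (μ := ν) (toMeasurable volume s) ε (by rw [hνt]; exact hε)
    calc volume (φ '' s) ≤ volume (φ '' U) :=
          measure_mono (image_mono ((subset_toMeasurable volume s).trans hsubU))
      _ ≤ ν U := key U hUopen
      _ ≤ ε := hUε.le
  refine le_antisymm (ENNReal.le_of_forall_pos_le_add fun ε hε _ => ?_) zero_le
  simpa [zero_add] using hmain (↑ε) (by exact_mod_cast hε)

/-- A.e. differentiability of the primitive of an integrable function. -/
lemma aux_aeDeriv (F : ℝ → ℝ) (hF : Integrable F) (a c : ℝ) :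
    ∀ᵐ x : ℝ, HasDerivAt (fun u => c + ∫ t in a..u, F t) (F x) x := by
  filter_upwards [IsUnifLocDoublingMeasure.ae_tendsto_average_norm_sub
    (μ := (volume : Measure ℝ)) hF.locallyIntegrable 1] with x hx
  have hx' : Tendsto (fun r : ℝ => ⨍ y in Metric.closedBall x r, ‖F y - F x‖)
      (𝓝[>] 0) (𝓝 0) := by
    refine hx (fun _ => x) id tendsto_id ?_
    filter_upwards [self_mem_nhdsWithin] with r (hr : 0 < r)
    simp [Metric.mem_closedBall, hr.le]
  rw [hasDerivAt_iff_isLittleO, Asymptotics.isLittleO_iff]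
  intro ε hε
  have h1 : ∀ᶠ r in 𝓝[>] (0:ℝ), ⨍ y in Metric.closedBall x r, ‖F y - F x‖ < ε / 2 :=
    hx'.eventually_lt_const (by linarith)
  obtain ⟨δ, hδmem, hδsub⟩ := mem_nhdsGT_iff_exists_Ioc_subset.mp h1
  have hδpos : 0 < δ := hδmem
  filter_upwards [Metric.ball_mem_nhds x hδpos] with u hu
  rcases eq_or_ne u x with rfl | hne
  · simp
  · set r : ℝ := |u - x| with hr
    have hrpos : 0 < r := abs_pos.mpr (sub_ne_zero.mpr hne)
    have hrδ : r ≤ δ := by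
      have := Metric.mem_ball.mp hu
      rw [Real.dist_eq] at this
      exact this.le
    have havg : ⨍ y in Metric.closedBall x r, ‖F y - F x‖ < ε / 2 :=
      hδsub ⟨hrpos, hrδ⟩
    have hadd := intervalIntegral.integral_add_adjacent_intervals (a := a) (b := x) (c := u)
      (f := F) (μ := volume) hF.intervalIntegrable hF.intervalIntegrable
    have heq : (fun w => c + ∫ t in a..w, F t) u - (fun w => c + ∫ t in a..w, F t) x
        - (u - x) • F x = ∫ t in x..u, (F t - F x) := by
      simp only
      rw [intervalIntegral.integral_sub hF.intervalIntegrable intervalIntegrable_const,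
        intervalIntegral.integral_const, ← hadd]
      simp only [smul_eq_mul]
      ring
    rw [heq]
    have hsub : Ι x u ⊆ Metric.closedBall x r := by
      intro y hy
      rw [Metric.mem_closedBall, Real.dist_eq, hr]
      rcases le_total x u with h | h
      · rw [uIoc_of_le h] at hy
        rw [abs_of_nonneg (sub_nonneg.2 hy.1.le), abs_of_nonneg (sub_nonneg.2 h)]
        linarith [hy.2]
      · rw [uIoc_of_ge h] at hy
        rw [abs_of_nonpos (sub_nonpos.2 hy.2), abs_of_nonpos (sub_nonpos.2 h)]
        linarith [hy.1.le]
    have hball : volume (Metric.closedBall x r) = ENNReal.ofReal (2 * r) := by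
      rw [Real.volume_closedBall]
    have hballtoReal : (volume (Metric.closedBall x r)).toReal = 2 * r := by
      rw [hball, ENNReal.toReal_ofReal (by linarith)]
    have hint : IntegrableOn (fun y => ‖F y - F x‖) (Metric.closedBall x r) volume := by
      refine Integrable.norm ?_
      exact (hF.integrableOn).sub ((integrableOn_const_iff (C := F x)).mpr
        (Or.inr (by rw [hball]; exact ENNReal.ofReal_lt_top)))
    have hmono : ∫ t in Ι x u, ‖F t - F x‖ ≤ ∫ y in Metric.closedBall x r, ‖F y - F x‖ := by
      refine setIntegral_mono_set hint ?_ (HasSubset.Subset.eventuallyLE hsub)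
      exact Eventually.of_forall (fun y => norm_nonneg _)
    have hcalc : ∫ y in Metric.closedBall x r, ‖F y - F x‖
        = (2 * r) * ⨍ y in Metric.closedBall x r, ‖F y - F x‖ := by
      rw [setAverage_eq, measureReal_def, ← hballtoReal, smul_eq_mul, ← mul_assoc,
        mul_inv_cancel₀ (by rw [hballtoReal]; positivity), one_mul]
    calc ‖∫ t in x..u, (F t - F x)‖
        ≤ ∫ t in Ι x u, ‖F t - F x‖ := intervalIntegral.norm_integral_le_integral_norm_uIoc
      _ ≤ ∫ y in Metric.closedBall x r, ‖F y - F x‖ := hmono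
      _ = (2 * r) * ⨍ y in Metric.closedBall x r, ‖F y - F x‖ := hcalc
      _ ≤ (2 * r) * (ε / 2) := by
          refine mul_le_mul_of_nonneg_left havg.le (by linarith)
      _ = ε * r := by ring
      _ ≤ ε * ‖u - x‖ := by rw [Real.norm_eq_abs, ← hr]

/-- Lemma 6.1 of the paper.
If `g = (g₁, g₂) : [a,b] → ℝ²` is absolutely continuous (i.e. `g t = g a + ∫ₐᵗ G`
for an integrable `G`), then for Lebesgue-a.e. `y ∈ ℝ` the level set
`{t ∈ [a,b] : g₂ t = y}` is finite, and at every `t ∈ [a,b]` with `g₂ t = y`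
the function `g₂` is differentiable at `t` (within `[a,b]`) with nonzero derivative. -/
theorem statement0 (a b : ℝ) (hab : a ≤ b) (g G : ℝ → ℝ × ℝ)
    (hG : IntegrableOn G (Icc a b) volume)
    (hg : ∀ t ∈ Icc a b, g t = g a + ∫ s in a..t, G s) :
    ∀ᵐ y : ℝ,
      {t | t ∈ Icc a b ∧ (g t).2 = y}.Finite ∧
      ∀ t ∈ Icc a b, (g t).2 = y →
        DifferentiableWithinAt ℝ (fun s => (g s).2) (Icc a b) t ∧
        derivWithin (fun s => (g s).2) (Icc a b) t ≠ 0 := by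
  classical
  set F : ℝ → ℝ := (Icc a b).indicator (fun s => (G s).2) with hFdef
  have hGsnd : IntegrableOn (fun s => (G s).2) (Icc a b) volume := hG.snd
  have hF : Integrable F := (integrable_indicator_iff measurableSet_Icc).2 hGsnd
  set φ : ℝ → ℝ := fun u => (g a).2 + ∫ t in a..u, F t with hφdef
  have hφcont : Continuous φ := continuous_const.add (hF.continuous_primitive a)
  -- φ agrees with (g ·).2 on Icc a b
  have hφg : ∀ t ∈ Icc a b, (g t).2 = φ t := by
    intro t ht
    have hsub : uIcc a t ⊆ Icc a b := uIcc_subset_Icc (left_mem_Icc.2 hab) ht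
    have hGt : IntervalIntegrable G volume a t :=
      (hG.mono_set hsub).intervalIntegrable
    have hsnd : (∫ s in a..t, G s).2 = ∫ s in a..t, (G s).2 := by
      have := (ContinuousLinearMap.snd ℝ ℝ ℝ).intervalIntegral_comp_comm hGt
      simpa using this.symm
    have hcongr : ∫ s in a..t, (G s).2 = ∫ s in a..t, F s :=
      intervalIntegral.integral_congr fun s hs => (Set.indicator_of_mem (hsub hs) (fun s => (G s).2)).symm
    rw [hg t ht]
    simp only [Prod.snd_add, hφdef]
    rw [hsnd, hcongr]
  -- bad sets
  set N : Set ℝ := {t | ¬ HasDerivAt φ (F t) t} with hNdef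
  have hNnull : volume N = 0 := by
    have := aux_aeDeriv F hF a ((g a).2)
    simpa [hNdef, ae_iff, hφdef] using this
  set s₂ : Set ℝ := {t | HasDerivAt φ 0 t} with hs₂def
  have hs₂null : volume (φ '' s₂) = 0 := by
    refine MeasureTheory.addHaar_image_eq_zero_of_det_fderivWithin_eq_zero volume
      (f' := fun _ => (0 : ℝ →L[ℝ] ℝ)) (fun x hx => ?_) (fun x hx => ?_)
    · have h0 : HasFDerivAt φ ((1 : ℝ →L[ℝ] ℝ).smulRight (0:ℝ)) x := hx.hasFDerivAt
      have : ((1 : ℝ →L[ℝ] ℝ).smulRight (0:ℝ)) = (0 : ℝ →L[ℝ] ℝ) := by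
        ext z; simp
      rw [this] at h0
      exact h0.hasFDerivWithinAt
    · have := LinearMap.det_zero' (Module.Basis.singleton Unit ℝ)
      simpa [ContinuousLinearMap.det] using this
  set Bad : Set ℝ := φ '' (Icc a b ∩ N) ∪ φ '' s₂ ∪ {φ a} with hBaddef
  have hBadnull : volume Bad = 0 := by
    refine le_antisymm ?_ zero_le
    calc volume Bad ≤ volume (φ '' (Icc a b ∩ N)) + volume (φ '' s₂) + volume {φ a} := by
          refine (measure_union_le _ _).trans ?_
          gcongr
          exact measure_union_le _ _
      _ = 0 := by
          rw [aux_luzinN F hF a ((g a).2)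
              (measure_mono_null inter_subset_right hNnull),
            hs₂null, measure_singleton]
          simp
  filter_upwards [measure_eq_zero_iff_ae_notMem.mp hBadnull] with y hy
  -- key pointwise claim
  have hkey : ∀ t ∈ Icc a b, (g t).2 = y → HasDerivAt φ (F t) t ∧ F t ≠ 0 ∧ a < b := by
    intro t ht hty
    have hφt : φ t = y := (hφg t ht).symm.trans hty
    have h1 : t ∉ N := fun hN => hy (Or.inl (Or.inl ⟨t, ⟨ht, hN⟩, hφt⟩))
    have h2 : HasDerivAt φ (F t) t := not_not.mp h1
    have h3 : F t ≠ 0 := by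
      intro h0
      exact hy (Or.inl (Or.inr ⟨t, by rwa [h0] at h2, hφt⟩))
    have h4 : a < b := by
      rcases lt_or_eq_of_le hab with h | h
      · exact h
      · exfalso
        have : t = a := by
          subst h
          simpa using (Icc_self a ▸ ht : t ∈ Icc a a)
        exact hy (Or.inr (by rw [← this, hφt]; exact rfl))
    exact ⟨h2, h3, h4⟩
  constructor
  · -- finiteness
    by_contra hfin
    have hinf : {t | t ∈ Icc a b ∧ (g t).2 = y}.Infinite := hfin
    obtain ⟨x, hxIcc, hacc⟩ :=
      hinf.exists_accPt_of_subset_isCompact isCompact_Icc (fun t ht => ht.1)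
    set L := {t | t ∈ Icc a b ∧ (g t).2 = y} with hLdef
    have hl : (𝓝[≠] x ⊓ 𝓟 L).NeBot := hacc
    -- φ x = y
    have hφx : φ x = y := by
      have h1 : Tendsto φ (𝓝[≠] x ⊓ 𝓟 L) (𝓝 (φ x)) :=
        (hφcont.tendsto x).mono_left (le_trans inf_le_left nhdsWithin_le_nhds)
      have h2 : Tendsto φ (𝓝[≠] x ⊓ 𝓟 L) (𝓝 y) := by
        refine tendsto_const_nhds.congr' ?_
        filter_upwards [eventually_inf_principal.mpr
          (Eventually.of_forall fun u (hu : u ∈ L) => hu)] with u hu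
        exact ((hφg u hu.1).symm.trans hu.2).symm
      exact tendsto_nhds_unique h1 h2
    have hxL : x ∈ L := ⟨hxIcc, (hφg x hxIcc).trans hφx⟩
    obtain ⟨hd, hF0, _⟩ := hkey x hxIcc hxL.2
    -- slope tends to F x but is eventually 0
    have hslope : Tendsto (slope φ x) (𝓝[≠] x ⊓ 𝓟 L) (𝓝 (F x)) :=
      (hasDerivAt_iff_tendsto_slope.mp hd).mono_left inf_le_left
    have hzero : Tendsto (slope φ x) (𝓝[≠] x ⊓ 𝓟 L) (𝓝 0) := by
      refine tendsto_const_nhds.congr' ?_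
      have hne : ∀ᶠ u in 𝓝[≠] x ⊓ 𝓟 L, u ≠ x :=
        (eventually_mem_nhdsWithin.filter_mono inf_le_left).mono fun u hu => hu
      have hmem : ∀ᶠ u in 𝓝[≠] x ⊓ 𝓟 L, u ∈ L :=
        eventually_inf_principal.mpr (Eventually.of_forall fun u hu => hu)
      filter_upwards [hne, hmem] with u hu hL
      have hφu : φ u = y := (hφg u hL.1).symm.trans hL.2
      simp [slope_def_field, hφu, hφx]
    exact hF0 (tendsto_nhds_unique hslope hzero)
  · -- differentiability with nonzero derivative
    intro t ht hty
    obtain ⟨hd, hF0, hlt⟩ := hkey t ht hty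
    have hdw : HasDerivWithinAt φ (F t) (Icc a b) t := hd.hasDerivWithinAt
    have hdiff : DifferentiableWithinAt ℝ (fun s => (g s).2) (Icc a b) t :=
      hdw.differentiableWithinAt.congr (fun s hs => hφg s hs) (hφg t ht)
    refine ⟨hdiff, ?_⟩
    rw [derivWithin_congr (fun s hs => hφg s hs) (hφg t ht),
      hdw.derivWithin (uniqueDiffOn_Icc hlt t ht)]
    exact hF0
end

section
/- Let n ≥ 1, let G ⊆ ℝⁿ be Lebesgue measurable, and let x ∈ G be a point of Lebesgue density 1 of G. Let f : ℝⁿ → ℝⁿ be injective on G and Fréchet differentiable at x with invertible derivative A = Df(x), and let h : f(G) → ℝⁿ be the inverse of the restriction f|_G, so h(f(a)) = a for all a ∈ G. If h is differentiable at y = f(x) within f(G), i.e. there exists a linear map L : ℝⁿ → ℝⁿ with h(z) − h(y) − L(z−y) = o(|z−y|) as z → y with z ∈ f(G), then L = A⁻¹. -/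
open MeasureTheory Filter Set
open scoped Topology ENNReal

/-- At a point of Lebesgue density 1, every direction lies in the tangent cone. -/
lemma tangentCone_eq_univ_of_density {n : ℕ} (hn : 1 ≤ n)
    (G : Set (EuclideanSpace ℝ (Fin n))) (x : EuclideanSpace ℝ (Fin n))
    (hdens : Tendsto
      (fun r : ℝ => volume (G ∩ Metric.ball x r) / volume (Metric.ball x r))
      (𝓝[>] (0 : ℝ)) (𝓝 1))
    (v : EuclideanSpace ℝ (Fin n)) : v ∈ tangentConeAt ℝ G x := by
  haveI : Nonempty (Fin n) := ⟨⟨0, hn⟩⟩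
  haveI : Nontrivial (EuclideanSpace ℝ (Fin n)) := inferInstance
  -- Key claim: balls around `x + r • v` of radius `ε * r` meet `G` for small `r`.
  have claim : ∀ ε : ℝ, 0 < ε → ∀ᶠ r in 𝓝[>] (0 : ℝ),
      (G ∩ Metric.ball (x + r • v) (ε * r)).Nonempty := by
    intro ε hε
    set K : ℝ := ‖v‖ + ε with hKdef
    have hK : 0 < K := lt_of_lt_of_le hε (le_add_of_nonneg_left (norm_nonneg v))
    set c' : ℝ≥0∞ := ENNReal.ofReal ((ε / K) ^ n) with hc'def
    have hc'0 : c' ≠ 0 := by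
      simp only [hc'def, ne_eq, ENNReal.ofReal_eq_zero, not_le]
      positivity
    have h1 : (1 : ℝ≥0∞) - c' < 1 :=
      ENNReal.sub_lt_self ENNReal.one_ne_top one_ne_zero hc'0
    have hev : ∀ᶠ R in 𝓝[>] (0 : ℝ),
        1 - c' < volume (G ∩ Metric.ball x R) / volume (Metric.ball x R) :=
      hdens.eventually (eventually_gt_nhds h1)
    have hmul : Tendsto (fun r : ℝ => K * r) (𝓝[>] (0 : ℝ)) (𝓝[>] (0 : ℝ)) := by
      apply tendsto_nhdsWithin_of_tendsto_nhds_of_eventually_within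
      · have : Tendsto (fun r : ℝ => K * r) (𝓝 (0 : ℝ)) (𝓝 (K * 0)) :=
          (continuous_const.mul continuous_id).tendsto 0
        simpa using this.mono_left nhdsWithin_le_nhds
      · exact eventually_mem_nhdsWithin.mono fun r hr => mul_pos hK hr
    filter_upwards [hmul.eventually hev, eventually_mem_nhdsWithin] with r h2 hr
    have hr : (0 : ℝ) < r := hr
    by_contra hemp
    rw [Set.not_nonempty_iff_eq_empty] at hemp
    set B := Metric.ball x (K * r) with hBdef
    set Bs := Metric.ball (x + r • v) (ε * r) with hBsdef
    have hsub : Bs ⊆ B := by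
      intro z hz
      rw [Metric.mem_ball] at hz ⊢
      have hd : dist (x + r • v) x = r * ‖v‖ := by
        rw [dist_eq_norm]
        simp [norm_smul, abs_of_pos hr]
      calc dist z x ≤ dist z (x + r • v) + dist (x + r • v) x := dist_triangle _ _ _
        _ < ε * r + r * ‖v‖ := by rw [hd]; exact add_lt_add_left hz _
        _ = K * r := by rw [hKdef]; ring
    have hdisj : G ∩ B ⊆ B \ Bs := by
      rintro z ⟨hzG, hzB⟩
      refine ⟨hzB, fun hzBs => ?_⟩
      have : z ∈ G ∩ Bs := ⟨hzG, hzBs⟩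
      rw [hemp] at this
      exact this
    have hfin : Module.finrank ℝ (EuclideanSpace ℝ (Fin n)) = n := finrank_euclideanSpace_fin
    have hBs_vol : volume Bs = c' * volume B := by
      rw [hBsdef, hBdef, Measure.addHaar_ball _ _ (by positivity : (0:ℝ) ≤ ε * r),
        Measure.addHaar_ball _ _ (by positivity : (0:ℝ) ≤ K * r), hfin]
      rw [← mul_assoc, hc'def, ← ENNReal.ofReal_mul (by positivity)]
      congr 2
      rw [← mul_pow]
      congr 1
      field_simp
    have hB0 : volume B ≠ 0 := (Metric.measure_ball_pos volume x (mul_pos hK hr)).ne'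
    have hBtop : volume B ≠ ⊤ := measure_ball_lt_top.ne
    have hle : volume (G ∩ B) ≤ (1 - c') * volume B := by
      calc volume (G ∩ B) ≤ volume (B \ Bs) := measure_mono hdisj
        _ = volume B - volume Bs :=
            measure_diff hsub Metric.isOpen_ball.measurableSet.nullMeasurableSet
              (lt_of_le_of_lt (measure_mono hsub) (lt_top_iff_ne_top.mpr hBtop)).ne
        _ = volume B - c' * volume B := by rw [hBs_vol]
        _ = (1 - c') * volume B := by
            rw [ENNReal.sub_mul (fun _ _ => hBtop), one_mul]
    have hratio : volume (G ∩ B) / volume B ≤ 1 - c' := by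
      rw [ENNReal.div_le_iff hB0 hBtop]
      exact hle
    exact absurd h2 (not_lt.mpr hratio)
  -- Build the tangent-cone sequences.
  have claim' : ∀ j : ℕ, ∃ δ : ℝ, 0 < δ ∧ ∀ r ∈ Set.Ioo (0:ℝ) δ,
      (G ∩ Metric.ball (x + r • v) ((1 / (j + 1)) * r)).Nonempty := by
    intro j
    have := claim (1 / (j + 1)) (by positivity)
    rw [(nhdsGT_basis (0:ℝ)).eventually_iff] at this
    obtain ⟨δ, hδ, hδ'⟩ := this
    exact ⟨δ, hδ, fun r hr => hδ' hr⟩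
  choose δ hδpos hδ using claim'
  set r : ℕ → ℝ := fun j => min (δ j / 2) (1 / (j + 1)) with hrdef
  have hrpos : ∀ j, 0 < r j := fun j => lt_min (by linarith [hδpos j]) (by positivity)
  have hrlt : ∀ j, r j < δ j := fun j =>
    lt_of_le_of_lt (min_le_left _ _) (by linarith [hδpos j])
  have hrle : ∀ j, r j ≤ 1 / (j + 1) := fun j => min_le_right _ _
  have hrzero : Tendsto r atTop (𝓝 0) := by
    apply squeeze_zero (fun j => (hrpos j).le) hrle
    exact tendsto_one_div_add_atTop_nhds_zero_nat
  have hg : ∀ j : ℕ, ∃ g, g ∈ G ∩ Metric.ball (x + r j • v) ((1 / (j + 1)) * r j) :=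
    fun j => hδ j (r j) ⟨hrpos j, hrlt j⟩
  choose g hg using hg
  refine mem_tangentConeAt_of_seq atTop (fun j => (r j)⁻¹) (fun j => g j - x) ?_
    (Eventually.of_forall fun j => ?_) ?_
  · rw [tendsto_zero_iff_norm_tendsto_zero]
    have hlim : Tendsto (fun j => r j * (1 + ‖v‖)) atTop (𝓝 0) := by
      simpa using hrzero.mul_const (1 + ‖v‖)
    refine squeeze_zero (fun j => norm_nonneg _) (fun j => ?_) hlim
    have hb := Metric.mem_ball.mp (hg j).2
    rw [dist_eq_norm] at hb
    have h1j : (1:ℝ) / (j + 1) ≤ 1 := by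
      rw [div_le_one (by positivity)]; linarith [(Nat.cast_nonneg j : (0:ℝ) ≤ j)]
    calc ‖g j - x‖ = ‖(g j - (x + r j • v)) + r j • v‖ := by congr 1; abel
      _ ≤ ‖g j - (x + r j • v)‖ + ‖r j • v‖ := norm_add_le _ _
      _ ≤ (1 / (j + 1)) * r j + r j * ‖v‖ := by
          rw [norm_smul, Real.norm_eq_abs, abs_of_pos (hrpos j)]; linarith
      _ ≤ r j * (1 + ‖v‖) := by nlinarith [hrpos j]
  · simpa using (hg j).1
  · rw [tendsto_iff_norm_sub_tendsto_zero]
    apply squeeze_zero (fun j => norm_nonneg _) _ tendsto_one_div_add_atTop_nhds_zero_nat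
    intro j
    have hb := Metric.mem_ball.mp (hg j).2
    rw [dist_eq_norm] at hb
    have hrne : (r j) ≠ 0 := (hrpos j).ne'
    have key : (r j)⁻¹ • (g j - x) - v = (r j)⁻¹ • (g j - (x + r j • v)) := by
      rw [smul_sub, smul_sub, smul_add, smul_smul, inv_mul_cancel₀ hrne, one_smul]
      abel
    rw [key, norm_smul, Real.norm_eq_abs, abs_of_pos (inv_pos.mpr (hrpos j))]
    calc (r j)⁻¹ * ‖g j - (x + r j • v)‖ ≤ (r j)⁻¹ * ((1 / (j + 1)) * r j) := by
          apply mul_le_mul_of_nonneg_left hb.le (inv_pos.mpr (hrpos j)).le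
      _ = 1 / (j + 1) := by field_simp

/-- differentiation of the inverse, from the proof of Lemma 4.2.
Let `x ∈ G` be a point of Lebesgue density `1` of a measurable set `G ⊆ ℝⁿ`, let `f` be
injective on `G` and differentiable at `x` with invertible derivative `A`, and let `h` be
the inverse of `f|_G`.  If `h` is differentiable at `y = f x` within `f '' G` with
derivative `L`, then `L = A⁻¹`. -/
theorem statement8 (n : ℕ) (hn : 1 ≤ n) (G : Set (EuclideanSpace ℝ (Fin n)))
    (hG : MeasurableSet G) (x : EuclideanSpace ℝ (Fin n)) (hx : x ∈ G)
    (hdens : Tendsto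
      (fun r : ℝ => volume (G ∩ Metric.ball x r) / volume (Metric.ball x r))
      (𝓝[>] (0 : ℝ)) (𝓝 1))
    (f h : EuclideanSpace ℝ (Fin n) → EuclideanSpace ℝ (Fin n))
    (hinj : Set.InjOn f G)
    (A : EuclideanSpace ℝ (Fin n) ≃L[ℝ] EuclideanSpace ℝ (Fin n))
    (hdf : HasFDerivAt f
      (A : EuclideanSpace ℝ (Fin n) →L[ℝ] EuclideanSpace ℝ (Fin n)) x)
    (hinv : ∀ a ∈ G, h (f a) = a)
    (L : EuclideanSpace ℝ (Fin n) →L[ℝ] EuclideanSpace ℝ (Fin n))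
    (hdh : HasFDerivWithinAt h L (f '' G) (f x)) :
    L = (A.symm : EuclideanSpace ℝ (Fin n) →L[ℝ] EuclideanSpace ℝ (Fin n)) := by
  have hud : UniqueDiffWithinAt ℝ G x := by
    constructor
    · rw [eq_univ_of_forall (tangentCone_eq_univ_of_density hn G x hdens)]
      rw [Submodule.span_univ]
      simp [dense_univ]
    · exact subset_closure hx
  have hcomp : HasFDerivWithinAt (h ∘ f)
      (L.comp (A : EuclideanSpace ℝ (Fin n) →L[ℝ] EuclideanSpace ℝ (Fin n))) G x :=
    hdh.comp x hdf.hasFDerivWithinAt (fun a ha => Set.mem_image_of_mem f ha)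
  have hid : HasFDerivWithinAt (h ∘ f)
      (ContinuousLinearMap.id ℝ (EuclideanSpace ℝ (Fin n))) G x :=
    (hasFDerivWithinAt_id x G).congr (fun a ha => hinv a ha) (hinv x hx)
  have key := hud.eq hcomp hid
  refine ContinuousLinearMap.ext fun z => ?_
  have := congrArg (fun T : EuclideanSpace ℝ (Fin n) →L[ℝ] EuclideanSpace ℝ (Fin n) =>
    T (A.symm z)) key
  simpa using this
end

section
/- Let n ≥ 2 and p > n−1 (with p ≥ 1 allowed when n = 2). Let Ω' ⊆ ℝⁿ be open, let h : Ω' → ℝⁿ be Lebesgue measurable, let μ be a locally finite Borel measure on Ω', let Φ : Ω' → [0,∞] be locally Lebesgue integrable, and let C > 0 be such that for every y ∈ Ω' and r > 0 with B(y,2r) ⊆ Ω' one has diam h(B(y,r)) ≤ C r^{1−n} μ(B(y,2r))^{(p−n+1)/p} ( ∫_{B(y,2r)} Φ dλ )^{(n−1)/p}. Then h is Fréchet differentiable at Lebesgue-almost every point of Ω', and there is a constant C' = C'(n,p,C) such that for almost every y ∈ Ω', ‖Dh(y)‖ ≤ C' · ( D̄μ(y) )^{(p−n+1)/p} · Φ(y)^{(n−1)/p},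 where D̄μ(y) = limsup_{r→0+} μ(B(y,r)) / λ(B(y,r)) is finite for almost every y. In particular ‖Dh‖ is locally Lebesgue integrable on Ω'. -/
open MeasureTheory Filter
open scoped ENNReal Topology

set_option maxHeartbeats 1000000

section StmtNine
open Metric Set
open scoped NNReal
namespace Stmt9

/-- scaling invariance of the filter `𝓝[>] 0` -/
lemma map_mul_nhdsGT {a : ℝ} (ha : 0 < a) :
    Filter.map (fun r : ℝ => a * r) (𝓝[>] (0:ℝ)) = 𝓝[>] (0:ℝ)  := by
  have key : ∀ b : ℝ, 0 < b →
      Filter.map (fun r : ℝ => b * r) (𝓝[>] (0:ℝ)) ≤ 𝓝[>] (0:ℝ) := by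
    intro b hb
    have h1 : Tendsto (fun r : ℝ => b * r) (𝓝 (0:ℝ)) (𝓝 (0:ℝ)) := by
      simpa using (continuous_mul_left b).tendsto (0:ℝ)
    refine tendsto_nhdsWithin_of_tendsto_nhds_of_eventually_within _
      (h1.mono_left nhdsWithin_le_nhds) ?_
    filter_upwards [self_mem_nhdsWithin] with r hr
    exact mul_pos hb hr
  refine le_antisymm (key a ha) ?_
  have h2 := Filter.map_mono (m := fun r : ℝ => a * r) (key a⁻¹ (inv_pos.2 ha))
  rw [Filter.map_map] at h2
  have : ((fun r : ℝ => a * r) ∘ fun r : ℝ => a⁻¹ * r) = id := by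
    funext r; simp only [Function.comp, id]; field_simp
  rwa [this, Filter.map_id] at h2

lemma limsup_comp_mul {u : ℝ → ℝ≥0∞} {a : ℝ} (ha : 0 < a) :
    limsup (fun r : ℝ => u (a * r)) (𝓝[>] (0:ℝ)) = limsup u (𝓝[>] (0:ℝ)) := by
  conv_rhs => rw [← map_mul_nhdsGT ha]
  rw [Filter.limsup, Filter.limsup, Filter.map_map]
  rfl

lemma eventually_nhdsGT_iff {P : ℝ → Prop} :
    (∀ᶠ r in 𝓝[>] (0:ℝ), P r) ↔ ∃ δ > 0, ∀ r : ℝ, 0 < r → r < δ → P r := by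
  constructor
  · intro hev
    rcases mem_nhdsGT_iff_exists_Ioo_subset.1 hev with ⟨δ, hδ, hsub⟩
    exact ⟨δ, hδ, fun r hr hrδ => hsub ⟨hr, hrδ⟩⟩
  · rintro ⟨δ, hδ, hP⟩
    rw [eventually_nhdsWithin_iff]
    filter_upwards [Metric.ball_mem_nhds (0:ℝ) hδ] with r hr hr0
    exact hP r hr0 (by simpa [Real.norm_eq_abs, abs_of_pos (show (0:ℝ) < r from hr0)] using mem_ball_zero_iff.1 hr)

/-- the set of points where `h` is pointwise `M`-Lipschitz at scale `1/(k+1)`. -/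
def F {α β : Type*} [PseudoMetricSpace α] [PseudoMetricSpace β]
    (h : α → β) (M k : ℕ) : Set α :=
  {y | ∀ z, dist z y < 1 / (k + 1) → dist (h z) (h y) ≤ M * dist z y}

variable {n : ℕ}

/-- From finiteness of the limsup of `diam (h '' ball y r) / r` we get membership in
some pointwise Lipschitz set `F h M k`. -/
lemma mem_F_of_limsup_lt_top {h : EuclideanSpace ℝ (Fin n) → EuclideanSpace ℝ (Fin n)}
    {y : EuclideanSpace ℝ (Fin n)}
    (hy : limsup (fun r : ℝ => EMetric.diam (h '' ball y r) / ENNReal.ofReal r)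
      (𝓝[>] (0:ℝ)) < ⊤) :
    ∃ M k : ℕ, y ∈ F h M k := by
  obtain ⟨M, hM⟩ := ENNReal.exists_nat_gt hy.ne
  have hev : ∀ᶠ r in 𝓝[>] (0:ℝ),
      EMetric.diam (h '' ball y r) / ENNReal.ofReal r < M :=
    eventually_lt_of_limsup_lt hM
  rcases eventually_nhdsGT_iff.1 hev with ⟨δ, hδ, hP⟩
  obtain ⟨k, hk⟩ := exists_nat_one_div_lt hδ
  refine ⟨M, k, fun z hz => ?_⟩
  rcases eq_or_ne z y with rfl | hzy
  · simp
  have hdz : 0 < dist z y := dist_pos.2 hzy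
  -- diam bound for each r ∈ (dist z y, δ)
  have key : ∀ r : ℝ, dist z y < r → r < δ →
      edist (h z) (h y) ≤ (M : ℝ≥0∞) * ENNReal.ofReal r := by
    intro r hr hrδ
    have hr0 : 0 < r := hdz.trans hr
    have h1 : edist (h z) (h y) ≤ EMetric.diam (h '' ball y r) :=
      EMetric.edist_le_diam_of_mem (mem_image_of_mem _ (by simpa [mem_ball] using hr))
        (mem_image_of_mem _ (by simp [mem_ball, hr0]))
    have h2 := (hP r hr0 hrδ).le
    have h3 : EMetric.diam (h '' ball y r) ≤ (M : ℝ≥0∞) * ENNReal.ofReal r := by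
      refine (ENNReal.div_le_iff_le_mul (Or.inl ?_) (Or.inl ?_)).1 h2 <;>
        simp [ENNReal.ofReal_eq_zero, hr0, not_le, hr0.le]
    exact h1.trans h3
  have hlim : Tendsto (fun r : ℝ => (M : ℝ≥0∞) * ENNReal.ofReal r) (𝓝[>] (dist z y))
      (𝓝 ((M : ℝ≥0∞) * ENNReal.ofReal (dist z y))) := by
    have : Tendsto (fun r : ℝ => ENNReal.ofReal r) (𝓝 (dist z y)) (𝓝 (ENNReal.ofReal (dist z y))) :=
      ENNReal.continuous_ofReal.tendsto _
    exact (ENNReal.Tendsto.const_mul (this.mono_left nhdsWithin_le_nhds)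
      (Or.inr (by simp)))
  have hdzδ : dist z y < δ := hz.trans_le (le_of_lt hk) |>.trans_le le_rfl
  have hev2 : ∀ᶠ r in 𝓝[>] (dist z y),
      edist (h z) (h y) ≤ (M : ℝ≥0∞) * ENNReal.ofReal r := by
    rw [eventually_nhdsWithin_iff]
    filter_upwards [Metric.ball_mem_nhds _ (sub_pos.2 hdzδ)] with r hr hrI
    refine key r hrI ?_
    have := mem_ball_iff_norm.1 hr
    have h4 : |r - dist z y| < δ - dist z y := by simpa [Real.norm_eq_abs] using this
    linarith [abs_lt.1 h4]
  have := ge_of_tendsto hlim hev2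
  rw [edist_dist] at this
  calc dist (h z) (h y)
      ≤ (M : ℝ) * dist z y := by
        rw [← ENNReal.ofReal_le_ofReal_iff (by positivity)]
        refine this.trans_eq ?_
        rw [ENNReal.ofReal_mul (by positivity)]
        simp
    _ = _ := rfl

lemma exists_lipschitz_extension (h : EuclideanSpace ℝ (Fin n) → EuclideanSpace ℝ (Fin n))
    (M : ℕ) {A : Set (EuclideanSpace ℝ (Fin n))}
    (hA : ∀ x ∈ A, ∀ y ∈ A, dist (h x) (h y) ≤ M * dist x y) :
    ∃ (K : ℝ≥0) (g : EuclideanSpace ℝ (Fin n) → EuclideanSpace ℝ (Fin n)),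
      LipschitzWith K g ∧ EqOn h g A := by
  set f : EuclideanSpace ℝ (Fin n) → (Fin n → ℝ) :=
    fun y => (WithLp.equiv 2 (Fin n → ℝ)) (h y) with hf
  have hflip : LipschitzOnWith (M : ℝ≥0) f A := by
    refine LipschitzOnWith.of_dist_le_mul fun x hx y hy => ?_
    have h1 : dist (f x) (f y) ≤ dist (h x) (h y) := by
      have := (PiLp.lipschitzWith_ofLp 2 (fun _ : Fin n => ℝ)).dist_le_mul (h x) (h y)
      simp only [NNReal.coe_one, one_mul] at this
      exact this
    exact h1.trans (by simpa using hA x hx y hy)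
  obtain ⟨g', hg', heq⟩ := hflip.extend_pi
  set c : ℝ≥0 := (Fintype.card (Fin n) : ℝ≥0) ^ ((1 : ℝ≥0∞) / 2).toReal with hc
  refine ⟨c * M, fun y => (WithLp.equiv 2 (Fin n → ℝ)).symm (g' y), ?_, fun a ha => ?_⟩
  · refine LipschitzWith.of_dist_le_mul fun x y => ?_
    have h2 : dist ((WithLp.equiv 2 (Fin n → ℝ)).symm (g' x))
        ((WithLp.equiv 2 (Fin n → ℝ)).symm (g' y)) ≤ c * dist (g' x) (g' y) := by
      have := (PiLp.antilipschitzWith_ofLp 2 (fun _ : Fin n => ℝ)).le_mul_dist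
        ((WithLp.equiv 2 (Fin n → ℝ)).symm (g' x)) ((WithLp.equiv 2 (Fin n → ℝ)).symm (g' y))
      simpa [hc] using this
    refine h2.trans ?_
    have h3 := hg'.dist_le_mul x y
    calc (c : ℝ) * dist (g' x) (g' y) ≤ c * ((M : ℝ≥0) * dist x y) := by
          refine mul_le_mul_of_nonneg_left ?_ c.2
          simpa using h3
      _ = (c * M : ℝ≥0) * dist x y := by push_cast; ring
  · have : f a = g' a := heq ha
    simp only []
    rw [← this, hf]
    simp

lemma nontrivialE (hn : 0 < n) : Nontrivial (EuclideanSpace ℝ (Fin n)) := by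
  have : Nonempty (Fin n) := ⟨⟨0, hn⟩⟩
  exact ⟨0, EuclideanSpace.single ⟨0, hn⟩ (1:ℝ), by
    intro hcontra
    have := congrArg (fun v => v ⟨0, hn⟩) hcontra.symm
    simp [EuclideanSpace.single] at this⟩

lemma exists_near_of_density (hn : 0 < n) {A : Set (EuclideanSpace ℝ (Fin n))}
    {y : EuclideanSpace ℝ (Fin n)} (hyA : y ∈ A)
    (hdens : Tendsto (fun r => volume (A ∩ closedBall y r) / volume (closedBall y r))
      (𝓝[>] (0:ℝ)) (𝓝 1)) {ε : ℝ} (hε : 0 < ε) (hε1 : ε ≤ 1) :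
    ∀ᶠ z in 𝓝 y, ∃ a ∈ A, dist a z ≤ ε * dist z y := by
  haveI := nontrivialE hn
  set θ : ℝ≥0∞ := ENNReal.ofReal ((ε/2)^n) with hθ
  have hθ0 : θ ≠ 0 := by
    simp only [hθ, ne_eq, ENNReal.ofReal_eq_zero, not_le]
    positivity
  have h1θ : (1:ℝ≥0∞) - θ < 1 :=
    ENNReal.sub_lt_self ENNReal.one_ne_top one_ne_zero hθ0
  have hev : ∀ᶠ r in 𝓝[>] (0:ℝ),
      (1:ℝ≥0∞) - θ < volume (A ∩ closedBall y r) / volume (closedBall y r) :=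
    hdens.eventually (eventually_gt_nhds h1θ)
  rcases eventually_nhdsGT_iff.1 hev with ⟨δ, hδ, hP⟩
  filter_upwards [Metric.ball_mem_nhds y (by positivity : 0 < δ/2)] with z hz
  rcases eq_or_ne z y with rfl | hzy
  · exact ⟨z, hyA, by simp⟩
  have hd0 : 0 < dist z y := dist_pos.2 hzy
  by_contra hcon
  push_neg at hcon
  set d := dist z y with hdd
  have hdδ : d < δ/2 := by simpa [hdd] using mem_ball.1 hz
  have hdisj : A ∩ ball z (ε * d) = ∅ := by
    ext a; simp only [mem_inter_iff, mem_ball, mem_empty_iff_false, iff_false, not_and, not_lt]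
    intro ha
    exact (hcon a ha).le
  have hsub : ball z (ε * d) ⊆ closedBall y (2 * d) := by
    intro w hw
    have := mem_ball.1 hw
    have h2 : dist w y ≤ dist w z + dist z y := dist_triangle _ _ _
    have h3 : ε * d ≤ d := by nlinarith
    simp only [mem_closedBall]
    linarith
  have hABsub : A ∩ closedBall y (2*d) ⊆ closedBall y (2*d) \ ball z (ε*d) := by
    rintro a ⟨haA, haB⟩
    refine ⟨haB, fun hab => ?_⟩
    have : a ∈ A ∩ ball z (ε*d) := ⟨haA, hab⟩
    simp [hdisj] at this
  -- volume computations
  have hvb : volume (ball z (ε*d)) = θ * volume (closedBall y (2*d)) := by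
    rw [Measure.addHaar_ball volume z (by positivity), Measure.addHaar_closedBall volume y
      (by positivity), hθ]
    rw [← mul_assoc, ← ENNReal.ofReal_mul (by positivity)]
    congr 2
    · rw [finrank_euclideanSpace_fin, ← mul_pow]
      congr 1
      ring
  have hfin : volume (closedBall y (2*d)) ≠ ⊤ := measure_closedBall_lt_top.ne
  have hmain : volume (A ∩ closedBall y (2*d)) ≤ ((1:ℝ≥0∞) - θ) * volume (closedBall y (2*d)) := by
    calc volume (A ∩ closedBall y (2*d)) ≤ volume (closedBall y (2*d) \ ball z (ε*d)) :=
          measure_mono hABsub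
      _ = volume (closedBall y (2*d)) - volume (ball z (ε*d)) :=
          measure_diff hsub measurableSet_ball.nullMeasurableSet measure_ball_lt_top.ne
      _ = ((1:ℝ≥0∞) - θ) * volume (closedBall y (2*d)) := by
          rw [ENNReal.sub_mul (fun _ _ => hfin), one_mul, hvb]
  have hlt := hP (2*d) (by positivity) (by linarith)
  have : volume (A ∩ closedBall y (2*d)) / volume (closedBall y (2*d)) ≤ (1:ℝ≥0∞) - θ :=
    ENNReal.div_le_of_le_mul hmain
  exact absurd (hlt.trans_le this) (lt_irrefl _)


lemma hasFDerivAt_of_eqOn (hn : 0 < n) {A : Set (EuclideanSpace ℝ (Fin n))}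
    {h g : EuclideanSpace ℝ (Fin n) → EuclideanSpace ℝ (Fin n)}
    {y : EuclideanSpace ℝ (Fin n)} {M k : ℕ} {K : ℝ≥0}
    (hg : LipschitzWith K g) (heq : EqOn h g A) (hAF : A ⊆ F h M k) (hyA : y ∈ A)
    (hdens : Tendsto (fun r => volume (A ∩ closedBall y r) / volume (closedBall y r))
      (𝓝[>] (0:ℝ)) (𝓝 1))
    (hgd : DifferentiableAt ℝ g y) : HasFDerivAt h (fderiv ℝ g y) y := by
  set T := fderiv ℝ g y with hT
  rw [hasFDerivAt_iff_isLittleO_nhds_zero]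
  rw [Asymptotics.isLittleO_iff]
  intro c hc
  set B : ℝ := (M:ℝ) + 2 + ‖T‖ with hB
  have hB0 : 0 < B := by positivity
  set ε : ℝ := min (c / B) 1 with hε
  have hε0 : 0 < ε := lt_min (by positivity) one_pos
  have hε1 : ε ≤ 1 := min_le_right _ _
  have hεB : ε * B ≤ c := by
    have : ε ≤ c / B := min_le_left _ _
    calc ε * B ≤ (c / B) * B := by nlinarith
      _ = c := by field_simp
  -- differentiability of g, quantitative form
  have hev2 : ∀ᶠ a in 𝓝 y, ‖g a - g y - T (a - y)‖ ≤ ε * ‖a - y‖ :=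
    Asymptotics.isLittleO_iff.1 hgd.hasFDerivAt.isLittleO hε0
  rcases Metric.eventually_nhds_iff.1 hev2 with ⟨ρ', hρ', hball⟩
  have hev1 := exists_near_of_density hn hyA hdens hε0 hε1
  rcases Metric.eventually_nhds_iff.1 hev1 with ⟨ρ'', hρ'', hnear⟩
  have hrad : (0:ℝ) < min (min (ρ'/2) (ρ''/2)) (1/(2*((k:ℝ)+1))) := by
    refine lt_min (lt_min (by positivity) (by positivity)) (by positivity)
  filter_upwards [Metric.ball_mem_nhds (0 : EuclideanSpace ℝ (Fin n)) hrad] with v hv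
  have hvnorm : ‖v‖ < min (min (ρ'/2) (ρ''/2)) (1/(2*((k:ℝ)+1))) := by
    simpa [dist_eq_norm] using mem_ball.1 hv
  set z := y + v with hz
  have hdzy : dist z y = ‖v‖ := by simp [hz, dist_eq_norm]
  have hv1 : ‖v‖ < ρ'/2 := lt_of_lt_of_le hvnorm ((min_le_left _ _).trans (min_le_left _ _))
  have hv2 : ‖v‖ < ρ''/2 := lt_of_lt_of_le hvnorm ((min_le_left _ _).trans (min_le_right _ _))
  have hv3 : ‖v‖ < 1/(2*((k:ℝ)+1)) := lt_of_lt_of_le hvnorm (min_le_right _ _)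
  obtain ⟨a, haA, hdista⟩ := hnear (show dist z y < ρ'' by rw [hdzy]; linarith)
  rw [hdzy] at hdista
  have hεv : ε * ‖v‖ ≤ ‖v‖ := by nlinarith [norm_nonneg v]
  have hay : dist a y ≤ 2 * ‖v‖ := by
    calc dist a y ≤ dist a z + dist z y := dist_triangle _ _ _
      _ ≤ ε * ‖v‖ + ‖v‖ := by rw [hdzy]; linarith
      _ ≤ 2 * ‖v‖ := by linarith
  have h2 : ‖g a - g y - T (a - y)‖ ≤ ε * (2 * ‖v‖) := by
    have := hball (show dist a y < ρ' by linarith)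
    refine this.trans ?_
    have : ‖a - y‖ ≤ 2 * ‖v‖ := by rw [← dist_eq_norm]; exact hay
    nlinarith
  have h3 : dist (h z) (h a) ≤ (M:ℝ) * (ε * ‖v‖) := by
    have hzak : dist z a < 1/((k:ℝ)+1) := by
      rw [dist_comm]
      calc dist a z ≤ ε * ‖v‖ := hdista
        _ ≤ ‖v‖ := hεv
        _ < 1/(2*((k:ℝ)+1)) := hv3
        _ ≤ 1/((k:ℝ)+1) := by
            rw [div_le_div_iff₀ (by positivity) (by positivity)]
            nlinarith
    have := hAF haA z hzak
    refine this.trans ?_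
    have h5 : dist z a ≤ ε * ‖v‖ := by rw [dist_comm]; exact hdista
    exact mul_le_mul_of_nonneg_left h5 (by positivity)
  have h4 : ‖T (a - z)‖ ≤ ‖T‖ * (ε * ‖v‖) := by
    calc ‖T (a - z)‖ ≤ ‖T‖ * ‖a - z‖ := T.le_opNorm _
      _ ≤ ‖T‖ * (ε * ‖v‖) := by
          refine mul_le_mul_of_nonneg_left ?_ (norm_nonneg _)
          rw [← dist_eq_norm]
          exact hdista
  have hiden : h (y + v) - h y - T v =
      (h z - h a) + (g a - g y - T (a - y)) + T (a - z) := by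
    rw [heq haA, heq hyA, ← hz]
    have : T (a - z) = T (a - y) - T (v) := by
      rw [← map_sub]
      congr 1
      rw [hz]
      abel
    rw [this]
    abel
  rw [hiden]
  calc ‖(h z - h a) + (g a - g y - T (a - y)) + T (a - z)‖
      ≤ ‖h z - h a‖ + ‖g a - g y - T (a - y)‖ + ‖T (a - z)‖ := norm_add₃_le
    _ ≤ (M:ℝ) * (ε * ‖v‖) + ε * (2 * ‖v‖) + ‖T‖ * (ε * ‖v‖) := by
        rw [← dist_eq_norm]
        exact add_le_add (add_le_add h3 h2) h4
    _ = ε * B * ‖v‖ := by rw [hB]; ring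
    _ ≤ c * ‖v‖ := by nlinarith [norm_nonneg v]


/-- Stepanov: a.e. point of pointwise-Lipschitz type is a differentiability point. -/
lemma ae_differentiableAt_of_mem_F (hn : 0 < n)
    (h : EuclideanSpace ℝ (Fin n) → EuclideanSpace ℝ (Fin n))
    {S : Set (EuclideanSpace ℝ (Fin n))}
    (hS : ∀ y ∈ S, ∃ M k : ℕ, y ∈ F h M k) :
    volume {y | y ∈ S ∧ ¬ DifferentiableAt ℝ h y} = 0 := by
  haveI : Nonempty (EuclideanSpace ℝ (Fin n)) := ⟨0⟩
  obtain ⟨e, he⟩ := TopologicalSpace.exists_dense_seq (EuclideanSpace ℝ (Fin n))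
  set A : ℕ → ℕ → ℕ → Set (EuclideanSpace ℝ (Fin n)) :=
    fun M k j => F h M k ∩ ball (e j) (1/(2*((k:ℝ)+1))) with hA
  have hcover : {y | y ∈ S ∧ ¬ DifferentiableAt ℝ h y} ⊆
      ⋃ M, ⋃ k, ⋃ j, (A M k j ∩ {y | ¬ DifferentiableAt ℝ h y}) := by
    rintro y ⟨hyS, hynd⟩
    obtain ⟨M, k, hyF⟩ := hS y hyS
    obtain ⟨j, hj⟩ := he.exists_dist_lt y (show (0:ℝ) < 1/(2*((k:ℝ)+1)) by positivity)
    refine mem_iUnion.2 ⟨M, mem_iUnion.2 ⟨k, mem_iUnion.2 ⟨j, ⟨⟨hyF, ?_⟩, hynd⟩⟩⟩⟩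
    rw [mem_ball]
    exact hj
  refine measure_mono_null hcover ?_
  refine measure_iUnion_null fun M => measure_iUnion_null fun k => measure_iUnion_null fun j => ?_
  -- h is Lipschitz on the piece A M k j
  have hlip : ∀ x ∈ A M k j, ∀ y ∈ A M k j, dist (h x) (h y) ≤ M * dist x y := by
    rintro x ⟨hxF, hxb⟩ y ⟨hyF, hyb⟩
    have hxy : dist x y < 1/((k:ℝ)+1) := by
      calc dist x y ≤ dist x (e j) + dist (e j) y := dist_triangle _ _ _
        _ < 1/(2*((k:ℝ)+1)) + 1/(2*((k:ℝ)+1)) := by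
            refine add_lt_add (mem_ball.1 hxb) ?_
            rw [dist_comm]
            exact mem_ball.1 hyb
        _ = 1/((k:ℝ)+1) := by
            rw [← add_div]
            rw [div_eq_div_iff (by positivity) (by positivity)]
            ring
    exact hyF x hxy
  obtain ⟨K, g, hg, heqn⟩ := exists_lipschitz_extension h M hlip
  have h1 := Besicovitch.ae_tendsto_measure_inter_div volume (A M k j)
  have h2 : ∀ᵐ y ∂(volume.restrict (A M k j)), DifferentiableAt ℝ g y :=
    ae_restrict_of_ae hg.ae_differentiableAt
  have h3 : ∀ᵐ y ∂(volume.restrict (A M k j)),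
      ¬ (y ∈ A M k j ∧ ¬ DifferentiableAt ℝ h y) := by
    filter_upwards [h1, h2] with y hy1 hy2
    rintro ⟨hyA, hynd⟩
    exact hynd (hasFDerivAt_of_eqOn hn hg heqn inter_subset_left hyA hy1 hy2).differentiableAt
  rw [ae_iff] at h3
  simp only [not_not] at h3
  refine le_antisymm ?_ zero_le
  calc volume (A M k j ∩ {y | ¬ DifferentiableAt ℝ h y})
      ≤ volume ({a | a ∈ A M k j ∧ ¬DifferentiableAt ℝ h a} ∩ A M k j) := by
        refine measure_mono fun y hy => ?_
        exact ⟨⟨hy.1, hy.2⟩, hy.1⟩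
    _ ≤ (volume.restrict (A M k j)) {a | a ∈ A M k j ∧ ¬DifferentiableAt ℝ h a} :=
        Measure.le_restrict_apply _ _
    _ = 0 := h3


lemma chunk {n : ℕ} (hn : 0 < n) (α β : ℝ) (hα : 0 ≤ α) (hβ : 0 ≤ β) (hαβ : α + β = 1)
    {Ω' : Set (EuclideanSpace ℝ (Fin n))} (hΩ' : IsOpen Ω')
    (h : EuclideanSpace ℝ (Fin n) → EuclideanSpace ℝ (Fin n))
    (μ : Measure (EuclideanSpace ℝ (Fin n)))
    (hμ : ∀ y ∈ Ω', μ.FiniteAtFilter (𝓝 y))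
    (Φ : EuclideanSpace ℝ (Fin n) → ℝ≥0∞) (hΦm : Measurable Φ)
    (hΦ : ∀ K ⊆ Ω', IsCompact K → ∫⁻ x in K, Φ x < ⊤)
    {C : ℝ} (hC : 0 < C)
    (hdiam : ∀ y ∈ Ω', ∀ r : ℝ, 0 < r → ball y (2*r) ⊆ Ω' →
      EMetric.diam (h '' ball y r) ≤ ENNReal.ofReal (C * r ^ (1 - (n:ℝ))) *
        μ (ball y (2*r)) ^ α * (∫⁻ x in ball y (2*r), Φ x) ^ β)
    {x₀ : EuclideanSpace ℝ (Fin n)} {r₀ : ℝ} (hr₀ : 0 < r₀)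
    (hVc : closedBall x₀ r₀ ⊆ Ω') :
    ∀ᵐ y ∂volume, y ∈ ball x₀ r₀ →
      (limsup (fun r : ℝ => μ (ball y r) / volume (ball y r)) (𝓝[>] (0:ℝ)) < ⊤) ∧
      (limsup (fun r : ℝ => μ (ball y r) / volume (ball y r)) (𝓝[>] (0:ℝ))
         ≤ (μ.restrict (ball x₀ r₀)).rnDeriv volume y) ∧
      (limsup (fun r : ℝ => EMetric.diam (h '' ball y r) / ENNReal.ofReal r)
        (𝓝[>] (0:ℝ)) < ⊤) ∧
      (Φ y < ⊤) ∧
      (DifferentiableAt ℝ h y →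
        (‖fderiv ℝ h y‖₊ : ℝ≥0∞) ≤
          2 * (ENNReal.ofReal (C * 2^n) * volume (ball (0:EuclideanSpace ℝ (Fin n)) 1)) *
            ((limsup (fun r : ℝ => μ (ball y r) / volume (ball y r)) (𝓝[>] (0:ℝ))) ^ α *
              Φ y ^ β)) := by
  haveI := nontrivialE hn
  set V := ball x₀ r₀ with hV
  set K0 : ℝ≥0∞ := ENNReal.ofReal (C * 2^n) * volume (ball (0:EuclideanSpace ℝ (Fin n)) 1)
    with hK0
  have hvol01 : volume (ball (0:EuclideanSpace ℝ (Fin n)) 1) ≠ ⊤ := measure_ball_lt_top.ne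
  have hK0top : K0 ≠ ⊤ := ENNReal.mul_ne_top ENNReal.ofReal_ne_top hvol01
  set μV := μ.restrict V with hμV
  have hμcB : μ (closedBall x₀ r₀) < ⊤ := by
    refine (isCompact_closedBall x₀ r₀).measure_lt_top_of_nhdsWithin fun x hx => ?_
    exact (hμ x (hVc hx)).filter_mono nhdsWithin_le_nhds
  haveI : IsFiniteMeasure μV := by
    constructor
    rw [hμV, Measure.restrict_apply_univ]
    exact (measure_mono (ball_subset_closedBall)).trans_lt hμcB
  set ρ := volume.withDensity (V.indicator Φ) with hρ
  have hΦV : ∫⁻ x in V, Φ x < ⊤ :=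
    (lintegral_mono_set ball_subset_closedBall).trans_lt
      (hΦ _ hVc (isCompact_closedBall x₀ r₀))
  haveI : IsFiniteMeasure ρ := by
    constructor
    rw [hρ, withDensity_apply _ MeasurableSet.univ, Measure.restrict_univ,
      lintegral_indicator measurableSet_ball]
    exact hΦV
  have a1 := Besicovitch.ae_tendsto_rnDeriv μV volume
  have a2 := Measure.rnDeriv_lt_top μV volume
  have a3 := Besicovitch.ae_tendsto_rnDeriv ρ volume
  have a4 : ρ.rnDeriv volume =ᶠ[ae volume] V.indicator Φ :=
    Measure.rnDeriv_withDensity volume (hΦm.indicator measurableSet_ball)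
  have a5 : ∀ᵐ y ∂volume, y ∈ V → Φ y < ⊤ := by
    rw [← ae_restrict_iff' measurableSet_ball]
    exact ae_lt_top hΦm hΦV.ne
  filter_upwards [a1, a2, a3, a4, a5] with y h1 h2 h3 h4 h5' hyV
  have h5 : Φ y < ⊤ := h5' hyV
  -- notation
  set u : ℝ → ℝ≥0∞ := fun s => μ (ball y s) / volume (ball y s) with hu
  set D := limsup u (𝓝[>] (0:ℝ)) with hD
  have hyΩ : y ∈ Ω' := hVc (ball_subset_closedBall hyV)
  have hδy : 0 < r₀ - dist y x₀ := by
    have := mem_ball.1 hyV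
    linarith
  -- small balls around y are inside V
  have hball_sub : ∀ s : ℝ, s < r₀ - dist y x₀ → ball y s ⊆ V := by
    intro s hs w hw
    have h6 := mem_ball.1 hw
    have : dist w x₀ ≤ dist w y + dist y x₀ := dist_triangle _ _ _
    rw [hV, mem_ball]
    linarith
  -- Step (i) : D ≤ rnDeriv μV volume y
  have stepI : D ≤ μV.rnDeriv volume y := by
    have hev : ∀ᶠ s in 𝓝[>] (0:ℝ),
        u s ≤ μV (closedBall y s) / volume (closedBall y s) := by
      rw [eventually_nhdsGT_iff]
      refine ⟨r₀ - dist y x₀, hδy, fun s hs0 hsδ => ?_⟩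
      have hsub := hball_sub s hsδ
      have hμb : μ (ball y s) = μV (ball y s) := by
        rw [hμV, Measure.restrict_apply measurableSet_ball, inter_eq_left.2 hsub]
      rw [hu]
      simp only
      rw [hμb, ← Measure.addHaar_closedBall_eq_addHaar_ball volume y s]
      exact ENNReal.div_le_div_right (measure_mono ball_subset_closedBall) _
    calc D ≤ limsup (fun s => μV (closedBall y s) / volume (closedBall y s)) (𝓝[>] (0:ℝ)) :=
          limsup_le_limsup hev
      _ = μV.rnDeriv volume y := h1.limsup_eq
  have hDlt : D < ⊤ := stepI.trans_lt h2
  -- the averaged integral of Φ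
  set e : ℝ → ℝ≥0∞ := fun s => (∫⁻ x in ball y s, Φ x) / volume (ball y s) with he
  set W : ℝ → ℝ≥0∞ := fun r => K0 * (u (2*r) ^ α * e (2*r) ^ β) with hW
  -- limsup of u (2 r) ^ α
  have l0 : limsup (fun r : ℝ => u (2*r)) (𝓝[>] (0:ℝ)) = D := limsup_comp_mul two_pos
  have rpow_mono : Monotone (fun x : ℝ≥0∞ => x ^ α) :=
    fun a b hab => ENNReal.rpow_le_rpow hab hα
  have rpow_monoβ : Monotone (fun x : ℝ≥0∞ => x ^ β) :=
    fun a b hab => ENNReal.rpow_le_rpow hab hβ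
  have l1 : limsup (fun r : ℝ => u (2*r) ^ α) (𝓝[>] (0:ℝ)) = D ^ α := by
    have := rpow_mono.map_limsup_of_continuousAt (F := 𝓝[>] (0:ℝ))
      (fun r : ℝ => u (2*r)) (ENNReal.continuous_rpow_const.continuousAt)
    rw [l0] at this
    exact this.symm
  -- tendsto of the ρ-average at scale 2r
  have l2 : Tendsto (fun r : ℝ => ρ (closedBall y (2*r)) / volume (closedBall y (2*r)))
      (𝓝[>] (0:ℝ)) (𝓝 (Φ y)) := by
    have hcomp : Tendsto (fun r : ℝ => 2*r) (𝓝[>] (0:ℝ)) (𝓝[>] (0:ℝ)) :=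
      le_of_eq (map_mul_nhdsGT two_pos)
    have := h3.comp hcomp
    rwa [h4, indicator_of_mem hyV] at this
  -- e (2 r) is eventually dominated by the ρ-average
  have l3 : ∀ᶠ r in 𝓝[>] (0:ℝ),
      e (2*r) ≤ ρ (closedBall y (2*r)) / volume (closedBall y (2*r)) := by
    rw [eventually_nhdsGT_iff]
    refine ⟨(r₀ - dist y x₀)/2, by positivity, fun r hr0 hrδ => ?_⟩
    have hsub : ball y (2*r) ⊆ V := hball_sub _ (by linarith)
    have heq1 : ∫⁻ x in ball y (2*r), Φ x = ρ (ball y (2*r)) := by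
      rw [hρ, withDensity_apply _ measurableSet_ball]
      refine (setLIntegral_congr_fun measurableSet_ball ?_).symm
      intro x hx
      exact indicator_of_mem (hsub hx) Φ
    rw [he]
    simp only
    rw [heq1, ← Measure.addHaar_closedBall_eq_addHaar_ball volume y (2*r)]
    exact ENNReal.div_le_div_right (measure_mono ball_subset_closedBall) _
  have hΦβtop : Φ y ^ β ≠ ⊤ := ENNReal.rpow_ne_top_of_nonneg hβ h5.ne
  have hDαtop : D ^ α ≠ ⊤ := ENNReal.rpow_ne_top_of_nonneg hα hDlt.ne
  have l4 : limsup (fun r : ℝ => e (2*r) ^ β) (𝓝[>] (0:ℝ)) ≤ Φ y ^ β := by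
    have hten : Tendsto (fun r : ℝ =>
        (ρ (closedBall y (2*r)) / volume (closedBall y (2*r))) ^ β) (𝓝[>] (0:ℝ))
        (𝓝 ((Φ y) ^ β)) :=
      (ENNReal.continuous_rpow_const.continuousAt.tendsto.comp l2)
    calc limsup (fun r : ℝ => e (2*r) ^ β) (𝓝[>] (0:ℝ))
        ≤ limsup (fun r : ℝ =>
            (ρ (closedBall y (2*r)) / volume (closedBall y (2*r))) ^ β) (𝓝[>] (0:ℝ)) := by
          refine limsup_le_limsup ?_
          filter_upwards [l3] with r hr
          exact rpow_monoβ hr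
      _ = Φ y ^ β := hten.limsup_eq
  -- E2 : limsup W is controlled
  set cc := K0 * (D ^ α * Φ y ^ β) with hcc
  have hcctop : cc ≠ ⊤ :=
    ENNReal.mul_ne_top hK0top (ENNReal.mul_ne_top hDαtop hΦβtop)
  have E2 : limsup W (𝓝[>] (0:ℝ)) ≤ cc := by
    have hmul : limsup (fun r : ℝ => u (2*r) ^ α * e (2*r) ^ β) (𝓝[>] (0:ℝ)) ≤
        D ^ α * Φ y ^ β := by
      have hlimsT : limsup (fun r : ℝ => e (2*r) ^ β) (𝓝[>] (0:ℝ)) ≠ ⊤ :=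
        ne_top_of_le_ne_top hΦβtop l4
      have hlimsU : limsup (fun r : ℝ => u (2*r) ^ α) (𝓝[>] (0:ℝ)) ≠ ⊤ := by
        rw [l1]; exact hDαtop
      have hmul0 := ENNReal.limsup_mul_le' (f := 𝓝[>] (0:ℝ))
        (u := fun r : ℝ => u (2*r) ^ α) (v := fun r : ℝ => e (2*r) ^ β)
        (Or.inr hlimsT) (Or.inl hlimsU)
      refine le_trans (le_trans (le_of_eq ?_) hmul0) ?_
      · rfl
      · rw [l1]
        exact mul_le_mul_right l4 _
    calc limsup W (𝓝[>] (0:ℝ)) = K0 * limsup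
          (fun r : ℝ => u (2*r) ^ α * e (2*r) ^ β) (𝓝[>] (0:ℝ)) := by
          rw [hW]
          exact ENNReal.limsup_const_mul_of_ne_top hK0top
      _ ≤ K0 * (D ^ α * Φ y ^ β) := mul_le_mul_right hmul _
  -- E1 : the quantitative diameter bound
  have E1 : ∀ᶠ r in 𝓝[>] (0:ℝ),
      EMetric.diam (h '' ball y r) ≤ ENNReal.ofReal r * W r := by
    rw [eventually_nhdsGT_iff]
    refine ⟨(r₀ - dist y x₀)/2, by positivity, fun r hr0 hrδ => ?_⟩
    have hsub : ball y (2*r) ⊆ V := hball_sub _ (by linarith)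
    set vB := volume (ball y (2*r)) with hvB
    have hvolB : vB = ENNReal.ofReal ((2*r)^n) *
        volume (ball (0:EuclideanSpace ℝ (Fin n)) 1) := by
      rw [hvB, Measure.addHaar_ball volume y (by positivity), finrank_euclideanSpace_fin]
    have hvol0 : vB ≠ 0 := (measure_ball_pos volume y (by positivity)).ne'
    have hvolt : vB ≠ ⊤ := measure_ball_lt_top.ne
    have hμeq : μ (ball y (2*r)) = u (2*r) * vB :=
      (ENNReal.div_mul_cancel hvol0 hvolt).symm
    have hIeq : (∫⁻ x in ball y (2*r), Φ x) = e (2*r) * vB :=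
      (ENNReal.div_mul_cancel hvol0 hvolt).symm
    have hd := hdiam y hyΩ r hr0 (hsub.trans (ball_subset_closedBall.trans hVc))
    refine hd.trans (le_of_eq ?_)
    rw [hμeq, hIeq, ENNReal.mul_rpow_of_nonneg _ _ hα, ENNReal.mul_rpow_of_nonneg _ _ hβ]
    have h7 : vB ^ α * vB ^ β = vB := by
      rw [← ENNReal.rpow_add _ _ hvol0 hvolt, hαβ, ENNReal.rpow_one]
    have h8 : ENNReal.ofReal (C * r ^ (1 - (n:ℝ))) * vB = ENNReal.ofReal r * K0 := by
      rw [hvolB, hK0, ← mul_assoc, ← ENNReal.ofReal_mul (by positivity), ← mul_assoc,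
        ← ENNReal.ofReal_mul (by positivity)]
      congr 2
      have hrn : r ^ (1 - (n:ℝ)) * (2*r)^n = 2^n * r := by
        rw [mul_pow, ← Real.rpow_natCast r n, ← mul_assoc, mul_comm (r ^ (1 - (n:ℝ))) ((2:ℝ)^n),
          mul_assoc, ← Real.rpow_add hr0]
        norm_num
      calc C * r ^ (1 - (n:ℝ)) * (2*r)^n = C * (r ^ (1 - (n:ℝ)) * (2*r)^n) := by ring
        _ = C * (2^n * r) := by rw [hrn]
        _ = r * (C * 2^n) := by ring
    calc ENNReal.ofReal (C * r ^ (1 - (n:ℝ))) * (u (2*r) ^ α * vB ^ α) *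
          (e (2*r) ^ β * vB ^ β)
        = (ENNReal.ofReal (C * r ^ (1 - (n:ℝ))) * (vB ^ α * vB ^ β)) *
            (u (2*r) ^ α * e (2*r) ^ β) := by ring
      _ = (ENNReal.ofReal (C * r ^ (1 - (n:ℝ))) * vB) * (u (2*r) ^ α * e (2*r) ^ β) := by
          rw [h7]
      _ = (ENNReal.ofReal r * K0) * (u (2*r) ^ α * e (2*r) ^ β) := by rw [h8]
      _ = ENNReal.ofReal r * W r := by rw [hW]; ring
  -- conclusion (iii) : finiteness of the diameter limsup
  have cIII : limsup (fun r : ℝ => EMetric.diam (h '' ball y r) / ENNReal.ofReal r)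
      (𝓝[>] (0:ℝ)) ≤ cc := by
    refine le_trans (limsup_le_limsup ?_) E2
    filter_upwards [E1] with r hr
    exact ENNReal.div_le_of_le_mul (hr.trans (le_of_eq (mul_comm _ _)))
  -- conclusion (v) : the derivative bound
  have hcc2top : 2 * cc ≠ ⊤ := ENNReal.mul_ne_top (by norm_num) hcctop
  have cV : DifferentiableAt ℝ h y → (‖fderiv ℝ h y‖₊ : ℝ≥0∞) ≤ 2 * cc := by
    intro hdiff
    set T := fderiv ℝ h y with hT
    have key : ∀ x : EuclideanSpace ℝ (Fin n), x ≠ 0 →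
        ENNReal.ofReal (‖T x‖ / ‖x‖) ≤ 2 * cc := by
      intro x hx
      have hxn : 0 < ‖x‖ := norm_pos_iff.2 hx
      refine ENNReal.le_of_forall_pos_le_add fun εn hεn _ => ?_
      have hlo := Asymptotics.isLittleO_iff.1 hdiff.hasFDerivAt.isLittleO
        (show (0:ℝ) < (εn:ℝ)/2 by positivity)
      have htt : Tendsto (fun t : ℝ => y + t • x) (𝓝[>] (0:ℝ)) (𝓝 y) := by
        have hcont : Continuous fun t : ℝ => y + t • x :=
          continuous_const.add (continuous_id.smul continuous_const)
        have := hcont.tendsto 0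
        simp only [zero_smul, add_zero] at this
        exact this.mono_left nhdsWithin_le_nhds
      have ev_lo := htt.eventually hlo
      have hcomp2 : Tendsto (fun t : ℝ => (2*‖x‖)*t) (𝓝[>] (0:ℝ)) (𝓝[>] (0:ℝ)) :=
        le_of_eq (map_mul_nhdsGT (by positivity))
      have ev_E1 := hcomp2.eventually E1
      have c4 : ((εn : ℝ≥0∞)/4) ≠ 0 := by
        simp [ENNReal.div_eq_zero_iff, hεn.ne']
      have ev_W := hcomp2.eventually
        (eventually_lt_of_limsup_lt (E2.trans_lt (ENNReal.lt_add_right hcctop c4)))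
      obtain ⟨t, ⟨⟨hlo_t, hE1_t⟩, hW_t⟩, ht0⟩ :=
        (((ev_lo.and ev_E1).and ev_W).and self_mem_nhdsWithin).exists
      have ht0' : (0:ℝ) < t := ht0
      set z := y + t • x with hz
      set d := t * ‖x‖ with hd
      have hd0 : 0 < d := by positivity
      have hzy : z - y = t • x := by rw [hz]; abel
      have hnorm_tx : ‖t • x‖ = d := by
        rw [norm_smul, Real.norm_eq_abs, abs_of_pos ht0', hd]
      -- real triangle inequality
      have hlo_t' : ‖h z - h y - T (t • x)‖ ≤ ((εn:ℝ)/2) * d := by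
        have := hlo_t
        simp only [hzy] at this ⊢
        calc ‖h z - h y - T (t • x)‖ ≤ (εn:ℝ)/2 * ‖z - y‖ := by
              simpa [hz] using hlo_t
          _ = (εn:ℝ)/2 * d := by rw [hz, add_sub_cancel_left, hnorm_tx]
      have hTtx : ‖T (t • x)‖ = t * ‖T x‖ := by
        rw [T.map_smul, norm_smul, Real.norm_eq_abs, abs_of_pos ht0']
      have hreal : t * ‖T x‖ ≤ ‖h z - h y‖ + ((εn:ℝ)/2) * d := by
        have htri : ‖T (t • x)‖ ≤ ‖h z - h y‖ + ‖h z - h y - T (t • x)‖ := by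
          have h10 := norm_sub_le (h z - h y) (h z - h y - T (t • x))
          rwa [sub_sub_cancel] at h10
        rw [hTtx] at htri
        linarith [hlo_t']
      -- pass to ℝ≥0∞
      set q := ENNReal.ofReal d with hq
      have hq0 : q ≠ 0 := by simp [hq, hd0, ENNReal.ofReal_eq_zero, not_le]
      have hqt : q ≠ ⊤ := ENNReal.ofReal_ne_top
      have hzball : h z ∈ h '' ball y ((2*‖x‖)*t) := by
        refine mem_image_of_mem _ ?_
        rw [mem_ball, dist_eq_norm, hz, add_sub_cancel_left, hnorm_tx]
        nlinarith
      have hyball : h y ∈ h '' ball y ((2*‖x‖)*t) :=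
        mem_image_of_mem _ (by rw [mem_ball, dist_self]; positivity)
      have hediam : ENNReal.ofReal ‖h z - h y‖ ≤
          EMetric.diam (h '' ball y ((2*‖x‖)*t)) := by
        rw [← dist_eq_norm, ← edist_dist]
        exact EMetric.edist_le_diam_of_mem hzball hyball
      have step1 : ENNReal.ofReal (t * ‖T x‖) ≤
          ENNReal.ofReal ((2*‖x‖)*t) * (cc + (εn : ℝ≥0∞)/4) + ENNReal.ofReal (((εn:ℝ)/2) * d) := by
        calc ENNReal.ofReal (t * ‖T x‖)
            ≤ ENNReal.ofReal (‖h z - h y‖ + ((εn:ℝ)/2) * d) := ENNReal.ofReal_le_ofReal hreal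
          _ = ENNReal.ofReal ‖h z - h y‖ + ENNReal.ofReal (((εn:ℝ)/2) * d) := by
              rw [ENNReal.ofReal_add (norm_nonneg _) (by positivity)]
          _ ≤ EMetric.diam (h '' ball y ((2*‖x‖)*t)) + ENNReal.ofReal (((εn:ℝ)/2) * d) :=
              add_le_add_left hediam _
          _ ≤ ENNReal.ofReal ((2*‖x‖)*t) * W ((2*‖x‖)*t) + ENNReal.ofReal (((εn:ℝ)/2) * d) :=
              add_le_add_left hE1_t _
          _ ≤ ENNReal.ofReal ((2*‖x‖)*t) * (cc + (εn : ℝ≥0∞)/4) +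
                ENNReal.ofReal (((εn:ℝ)/2) * d) := by
              exact add_le_add_left (mul_le_mul_right hW_t.le _) _
      -- rewrite both sides and divide by q
      have hr2q : ENNReal.ofReal ((2*‖x‖)*t) = 2 * q := by
        rw [hq, hd, show (2*‖x‖)*t = 2*(t*‖x‖) by ring, ENNReal.ofReal_mul (by norm_num)]
        norm_num
      have hsecond : ENNReal.ofReal (((εn:ℝ)/2) * d) = ((εn : ℝ≥0∞)/2) * q := by
        rw [hq, ENNReal.ofReal_mul (by positivity)]
        congr 1
        rw [ENNReal.ofReal_div_of_pos (by norm_num)]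
        norm_num [ENNReal.ofReal_coe_nnreal]
      have step2 : ENNReal.ofReal (‖T x‖ / ‖x‖) * q ≤
          ((2 * (cc + (εn : ℝ≥0∞)/4)) + (εn : ℝ≥0∞)/2) * q := by
        have hLHS : ENNReal.ofReal (t * ‖T x‖) = ENNReal.ofReal (‖T x‖ / ‖x‖) * q := by
          rw [hq, hd, ← ENNReal.ofReal_mul (by positivity)]
          congr 1
          field_simp
        rw [← hLHS]
        refine step1.trans (le_of_eq ?_)
        rw [hr2q, hsecond]
        ring
      have step3 : ENNReal.ofReal (‖T x‖ / ‖x‖) ≤ 2 * (cc + (εn : ℝ≥0∞)/4) + (εn : ℝ≥0∞)/2 :=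
        (ENNReal.mul_le_mul_iff_left hq0 hqt).1 step2
      refine step3.trans (le_of_eq ?_)
      have h9 : 2 * ((εn : ℝ≥0∞)/4) = (εn : ℝ≥0∞)/2 := by
        rw [mul_div_assoc']
        rw [show (4:ℝ≥0∞) = 2*2 by norm_num, ENNReal.mul_div_mul_left _ _ (by norm_num) (by norm_num)]
      rw [mul_add, h9, add_assoc, ENNReal.add_halves]
    -- conclude the operator norm bound
    have hnorm : ‖T‖ ≤ (2*cc).toReal := by
      refine T.opNorm_le_bound ENNReal.toReal_nonneg fun x => ?_
      rcases eq_or_ne x 0 with rfl | hx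
      · simp
      have hxn : 0 < ‖x‖ := norm_pos_iff.2 hx
      have := (ENNReal.ofReal_le_iff_le_toReal hcc2top).1 (key x hx)
      calc ‖T x‖ = ‖T x‖ / ‖x‖ * ‖x‖ := by field_simp
        _ ≤ (2*cc).toReal * ‖x‖ := by nlinarith
    calc (‖T‖₊ : ℝ≥0∞) = ENNReal.ofReal ‖T‖ := (ofReal_norm T).symm
      _ ≤ ENNReal.ofReal ((2*cc).toReal) := ENNReal.ofReal_le_ofReal hnorm
      _ = 2 * cc := ENNReal.ofReal_toReal hcc2top
  exact ⟨hDlt, stepI, lt_of_le_of_lt cIII hcctop.lt_top, h5,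
    fun hdiff => (cV hdiff).trans (le_of_eq (by rw [hcc]; ring))⟩

end Stmt9

end StmtNine

open Metric Set in
/-- Steps 1–2 of the proof of Theorems 1.1 and 1.2.
Let `n ≥ 2`, `p > n−1` (or `p ≥ 1` when `n = 2`), `Ω' ⊆ ℝⁿ` open, `h : Ω' → ℝⁿ`
measurable, `μ` a locally finite Borel measure on `Ω'`, `Φ : Ω' → [0,∞]` locally
integrable and `C > 0` such that the diameter estimate
`diam h(B(y,r)) ≤ C r^{1−n} μ(B(y,2r))^{(p−n+1)/p} (∫_{B(y,2r)} Φ)^{(n−1)/p}` holds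
whenever `B(y,2r) ⊆ Ω'`.  Then the upper density `D̄μ` is a.e. finite, `h` is
differentiable a.e. in `Ω'` with
`‖Dh(y)‖ ≤ C' (D̄μ(y))^{(p−n+1)/p} Φ(y)^{(n−1)/p}` a.e. for a constant `C' = C'(n,p,C)`,
and `‖Dh‖` is locally integrable on `Ω'`. -/
theorem statement9 (n : ℕ) (hn : 2 ≤ n) (p : ℝ)
    (hp : (n : ℝ) - 1 < p ∨ (n = 2 ∧ 1 ≤ p))
    (Ω' : Set (EuclideanSpace ℝ (Fin n))) (hΩ' : IsOpen Ω')
    (h : EuclideanSpace ℝ (Fin n) → EuclideanSpace ℝ (Fin n)) (hmeas : Measurable h)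
    (μ : Measure (EuclideanSpace ℝ (Fin n)))
    (hμ : ∀ y ∈ Ω', μ.FiniteAtFilter (𝓝 y))
    (Φ : EuclideanSpace ℝ (Fin n) → ℝ≥0∞) (hΦm : Measurable Φ)
    (hΦ : ∀ K ⊆ Ω', IsCompact K → ∫⁻ x in K, Φ x < ⊤)
    (C : ℝ) (hC : 0 < C)
    (hdiam : ∀ y ∈ Ω', ∀ r : ℝ, 0 < r → Metric.ball y (2 * r) ⊆ Ω' →
      EMetric.diam (h '' Metric.ball y r) ≤
        ENNReal.ofReal (C * r ^ (1 - (n : ℝ))) *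
          μ (Metric.ball y (2 * r)) ^ ((p - (n : ℝ) + 1) / p) *
          (∫⁻ x in Metric.ball y (2 * r), Φ x) ^ (((n : ℝ) - 1) / p)) :
    (∀ᵐ y ∂(volume.restrict Ω'),
      limsup (fun r : ℝ => μ (Metric.ball y r) / volume (Metric.ball y r))
        (𝓝[>] (0 : ℝ)) < ⊤) ∧
    (∀ᵐ y ∂(volume.restrict Ω'), DifferentiableAt ℝ h y) ∧
    (∃ C' : ℝ, 0 < C' ∧
      ∀ᵐ y ∂(volume.restrict Ω'),
        (‖fderiv ℝ h y‖₊ : ℝ≥0∞) ≤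
          ENNReal.ofReal C' *
            (limsup (fun r : ℝ => μ (Metric.ball y r) / volume (Metric.ball y r))
                (𝓝[>] (0 : ℝ))) ^ ((p - (n : ℝ) + 1) / p) *
            Φ y ^ (((n : ℝ) - 1) / p)) ∧
    LocallyIntegrableOn (fun y => ‖fderiv ℝ h y‖) Ω' volume := by

  classical
  have hn0 : 0 < n := lt_of_lt_of_le two_pos hn
  have hn1 : (1:ℝ) ≤ (n:ℝ) - 1 := by
    have : (2:ℝ) ≤ (n:ℝ) := by exact_mod_cast hn
    linarith
  have hp0 : 0 < p := by
    rcases hp with hp1 | ⟨_, hp2⟩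
    · linarith
    · linarith
  set α := (p - (n:ℝ) + 1) / p with hαdef
  set β := ((n:ℝ) - 1) / p with hβdef
  have hα : 0 ≤ α := by
    rcases hp with hp1 | ⟨hn2, hp2⟩
    · refine div_nonneg (by linarith) hp0.le
    · have : (n:ℝ) = 2 := by exact_mod_cast hn2
      refine div_nonneg (by rw [this]; linarith) hp0.le
  have hβ : 0 < β := div_pos (by linarith) hp0
  have hαβ : α + β = 1 := by
    rw [hαdef, hβdef, ← add_div, div_eq_one_iff_eq hp0.ne']
    ring
  -- countable cover of Ω' by balls whose closure is contained in Ω'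
  have hch : ∀ x : {x // x ∈ Ω'}, ∃ r : ℝ, 0 < r ∧ closedBall x.1 r ⊆ Ω' := by
    rintro ⟨x, hx⟩
    rcases Metric.isOpen_iff.1 hΩ' x hx with ⟨r, hr0, hr⟩
    exact ⟨r/2, by positivity, (closedBall_subset_ball (by linarith)).trans hr⟩
  choose rad hrad0 hradsub using hch
  set s : {x // x ∈ Ω'} → Set (EuclideanSpace ℝ (Fin n)) := fun x => ball x.1 (rad x) with hs
  obtain ⟨T, hTc, hTun⟩ := TopologicalSpace.isOpen_iUnion_countable s fun x => isOpen_ball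
  have hcov : Ω' ⊆ ⋃ x ∈ T, s x := by
    intro y hy
    rw [hTun]
    exact mem_iUnion.2 ⟨⟨y, hy⟩, mem_ball_self (hrad0 _)⟩
  -- the per-chunk information
  have hchunk : ∀ x : {x // x ∈ Ω'}, ∀ᵐ y ∂volume, y ∈ s x →
      (limsup (fun r : ℝ => μ (ball y r) / volume (ball y r)) (𝓝[>] (0:ℝ)) < ⊤) ∧
      (limsup (fun r : ℝ => μ (ball y r) / volume (ball y r)) (𝓝[>] (0:ℝ))
         ≤ (μ.restrict (s x)).rnDeriv volume y) ∧
      (limsup (fun r : ℝ => EMetric.diam (h '' ball y r) / ENNReal.ofReal r)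
        (𝓝[>] (0:ℝ)) < ⊤) ∧
      (Φ y < ⊤) ∧
      (DifferentiableAt ℝ h y →
        (‖fderiv ℝ h y‖₊ : ℝ≥0∞) ≤
          2 * (ENNReal.ofReal (C * 2^n) * volume (ball (0:EuclideanSpace ℝ (Fin n)) 1)) *
            ((limsup (fun r : ℝ => μ (ball y r) / volume (ball y r)) (𝓝[>] (0:ℝ))) ^ α *
              Φ y ^ β)) := fun x =>
    Stmt9.chunk hn0 α β hα hβ.le hαβ hΩ' h μ hμ Φ hΦm hΦ hC hdiam (hrad0 x) (hradsub x)
  -- globalize over the countable cover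
  have hGlob : ∀ᵐ y ∂volume, y ∈ Ω' →
      (limsup (fun r : ℝ => μ (ball y r) / volume (ball y r)) (𝓝[>] (0:ℝ)) < ⊤) ∧
      (limsup (fun r : ℝ => EMetric.diam (h '' ball y r) / ENNReal.ofReal r)
        (𝓝[>] (0:ℝ)) < ⊤) ∧
      (DifferentiableAt ℝ h y →
        (‖fderiv ℝ h y‖₊ : ℝ≥0∞) ≤
          2 * (ENNReal.ofReal (C * 2^n) * volume (ball (0:EuclideanSpace ℝ (Fin n)) 1)) *
            ((limsup (fun r : ℝ => μ (ball y r) / volume (ball y r)) (𝓝[>] (0:ℝ))) ^ α *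
              Φ y ^ β)) := by
    have hall : ∀ᵐ y ∂volume, ∀ x ∈ T, y ∈ s x →
        ((limsup (fun r : ℝ => μ (ball y r) / volume (ball y r)) (𝓝[>] (0:ℝ)) < ⊤) ∧
        (limsup (fun r : ℝ => μ (ball y r) / volume (ball y r)) (𝓝[>] (0:ℝ))
           ≤ (μ.restrict (s x)).rnDeriv volume y) ∧
        (limsup (fun r : ℝ => EMetric.diam (h '' ball y r) / ENNReal.ofReal r)
          (𝓝[>] (0:ℝ)) < ⊤) ∧
        (Φ y < ⊤) ∧
        (DifferentiableAt ℝ h y →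
          (‖fderiv ℝ h y‖₊ : ℝ≥0∞) ≤
            2 * (ENNReal.ofReal (C * 2^n) * volume (ball (0:EuclideanSpace ℝ (Fin n)) 1)) *
              ((limsup (fun r : ℝ => μ (ball y r) / volume (ball y r)) (𝓝[>] (0:ℝ))) ^ α *
                Φ y ^ β))) :=
      (ae_ball_iff hTc).2 fun x _ => hchunk x
    filter_upwards [hall] with y hy hyΩ
    obtain ⟨x, hxT, hyx⟩ := mem_iUnion₂.1 (hcov hyΩ)
    obtain ⟨g1, _, g3, _, g5⟩ := hy x hxT hyx
    exact ⟨g1, g3, g5⟩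
  -- Stepanov: a.e. differentiability
  have hnull : volume {y | y ∈ {y | y ∈ Ω' ∧
      limsup (fun r : ℝ => EMetric.diam (h '' ball y r) / ENNReal.ofReal r)
        (𝓝[>] (0:ℝ)) < ⊤} ∧ ¬ DifferentiableAt ℝ h y} = 0 :=
    Stmt9.ae_differentiableAt_of_mem_F hn0 h (fun y hy => Stmt9.mem_F_of_limsup_lt_top hy.2)
  have hdiff_ae : ∀ᵐ y ∂volume, y ∈ Ω' → DifferentiableAt ℝ h y := by
    have h0 : ∀ᵐ y ∂volume, ¬(y ∈ {y | y ∈ Ω' ∧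
        limsup (fun r : ℝ => EMetric.diam (h '' ball y r) / ENNReal.ofReal r)
          (𝓝[>] (0:ℝ)) < ⊤} ∧ ¬ DifferentiableAt ℝ h y) := by
      rw [ae_iff]
      refine measure_mono_null (fun a ha => ?_) hnull
      exact not_not.1 ha
    filter_upwards [hGlob, h0] with y hy1 hy2 hyΩ
    by_contra hnd
    exact hy2 ⟨⟨hyΩ, (hy1 hyΩ).2.1⟩, hnd⟩
  have hmeasΩ : MeasurableSet Ω' := hΩ'.measurableSet
  have vol01ne : volume (ball (0:EuclideanSpace ℝ (Fin n)) 1) ≠ ⊤ := measure_ball_lt_top.ne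
  have vol01pos : 0 < volume (ball (0:EuclideanSpace ℝ (Fin n)) 1) :=
    measure_ball_pos volume _ one_pos
  have hK0ne : (2 : ℝ≥0∞) * (ENNReal.ofReal (C * 2^n) *
      volume (ball (0:EuclideanSpace ℝ (Fin n)) 1)) ≠ ⊤ :=
    ENNReal.mul_ne_top (by norm_num) (ENNReal.mul_ne_top ENNReal.ofReal_ne_top vol01ne)
  refine ⟨?_, ?_, ?_, ?_⟩
  · exact (ae_restrict_iff' hmeasΩ).2 (hGlob.mono fun y hy hyΩ => (hy hyΩ).1)
  · exact (ae_restrict_iff' hmeasΩ).2 hdiff_ae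
  · refine ⟨2*C*2^n * (volume (ball (0:EuclideanSpace ℝ (Fin n)) 1)).toReal, ?_, ?_⟩
    · have := ENNReal.toReal_pos vol01pos.ne' vol01ne
      positivity
    · have hCeq : ENNReal.ofReal (2*C*2^n * (volume (ball (0:EuclideanSpace ℝ (Fin n)) 1)).toReal)
          = 2 * (ENNReal.ofReal (C * 2^n) * volume (ball (0:EuclideanSpace ℝ (Fin n)) 1)) := by
        rw [show (2:ℝ)*C*2^n * (volume (ball (0:EuclideanSpace ℝ (Fin n)) 1)).toReal
            = (2:ℝ) * ((C*2^n) * (volume (ball (0:EuclideanSpace ℝ (Fin n)) 1)).toReal) by ring,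
          ENNReal.ofReal_mul (by norm_num), ENNReal.ofReal_mul (by positivity),
          ENNReal.ofReal_toReal vol01ne, ENNReal.ofReal_ofNat]
      rw [ae_restrict_iff' hmeasΩ]
      filter_upwards [hGlob, hdiff_ae] with y hy1 hy2 hyΩ
      have hb := (hy1 hyΩ).2.2 (hy2 hyΩ)
      rw [hCeq]
      exact hb.trans (le_of_eq (by ring))
  · intro x hx
    obtain ⟨x', hx'T, hxx'⟩ := mem_iUnion₂.1 (hcov hx)
    have hVΩ : s x' ⊆ Ω' := ball_subset_closedBall.trans (hradsub x')
    refine ⟨s x', mem_nhdsWithin_of_mem_nhds (isOpen_ball.mem_nhds hxx'), ?_⟩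
    have hmeasV : MeasurableSet (s x') := measurableSet_ball
    set rn := (μ.restrict (s x')).rnDeriv volume with hrn
    have hbd : ∀ᵐ y ∂(volume.restrict (s x')), (‖fderiv ℝ h y‖₊ : ℝ≥0∞) ≤
        2 * (ENNReal.ofReal (C * 2^n) * volume (ball (0:EuclideanSpace ℝ (Fin n)) 1)) *
          (rn y ^ α * Φ y ^ β) := by
      rw [ae_restrict_iff' hmeasV]
      filter_upwards [hchunk x', hdiff_ae] with y hy hy2 hyV
      obtain ⟨_, g2, _, _, g5⟩ := hy hyV
      refine (g5 (hy2 (hVΩ hyV))).trans ?_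
      exact mul_le_mul_right (mul_le_mul_left (ENNReal.rpow_le_rpow g2 hα) _) _
    have hμcB : μ (closedBall x'.1 (rad x')) < ⊤ :=
      (isCompact_closedBall _ _).measure_lt_top_of_nhdsWithin
        (fun z hz => (hμ z (hradsub x' hz)).filter_mono nhdsWithin_le_nhds)
    have h_rn : ∫⁻ y in s x', rn y ∂volume ≠ ⊤ := by
      refine ne_top_of_le_ne_top ?_ ((setLIntegral_le_lintegral _ _).trans
        (Measure.lintegral_rnDeriv_le))
      rw [Measure.restrict_apply_univ]
      exact ((measure_mono ball_subset_closedBall).trans_lt hμcB).ne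
    have h_Φ : ∫⁻ y in s x', Φ y ∂volume ≠ ⊤ :=
      ((lintegral_mono_set ball_subset_closedBall).trans_lt
        (hΦ _ (hradsub x') (isCompact_closedBall _ _))).ne
    constructor
    · exact ((measurable_fderiv ℝ h).norm).aestronglyMeasurable
    · rw [HasFiniteIntegral]
      calc ∫⁻ y in s x', (‖‖fderiv ℝ h y‖‖₊ : ℝ≥0∞) ∂volume
          = ∫⁻ y in s x', (‖fderiv ℝ h y‖₊ : ℝ≥0∞) ∂volume := by
            simp only [nnnorm_norm]
        _ ≤ ∫⁻ y in s x', 2 * (ENNReal.ofReal (C * 2^n) *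
              volume (ball (0:EuclideanSpace ℝ (Fin n)) 1)) * (rn y ^ α * Φ y ^ β) ∂volume :=
            lintegral_mono_ae hbd
        _ = 2 * (ENNReal.ofReal (C * 2^n) * volume (ball (0:EuclideanSpace ℝ (Fin n)) 1)) *
              ∫⁻ y in s x', rn y ^ α * Φ y ^ β ∂volume :=
            lintegral_const_mul' _ _ hK0ne
        _ ≤ 2 * (ENNReal.ofReal (C * 2^n) * volume (ball (0:EuclideanSpace ℝ (Fin n)) 1)) *
              ((∫⁻ y in s x', rn y ∂volume) ^ α * (∫⁻ y in s x', Φ y ∂volume) ^ β) := by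
            refine mul_le_mul_right ?_ _
            exact ENNReal.lintegral_mul_norm_pow_le
              ((Measure.measurable_rnDeriv _ _).aemeasurable) hΦm.aemeasurable hα hβ.le hαβ
        _ < ⊤ := by
            refine ENNReal.mul_lt_top hK0ne.lt_top ?_
            exact ENNReal.mul_lt_top
              (ENNReal.rpow_lt_top_of_nonneg hα h_rn)
              (ENNReal.rpow_lt_top_of_nonneg hβ.le h_Φ)
end
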